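/- arXiv:2605.07595 — 9 statements merged into one kernel-verified Lean document; each statement's English description precedes it below -/
import Mathlib

section
/- Let q be a prime power, H ∈ 𝔽_q^{r×n}, and C = ker(H). Let 0 ≤ E ≤ E⁺ ≤ n and 0 ≤ τ ≤ 1. Suppose C satisfies the (E,E⁺,τ)-line proximity-gap property: every affine line L = {s₀ + α s₁ : α ∈ 𝔽_q} ⊆ 𝔽_q^r with |L ∩ H_E|/|L| > τ satisfies L ⊆ H_{E⁺}. Then C satisfies the (E,E⁺,τ·q/(q−1))-space proximity-gap property: every affine subspace S ⊆ 𝔽_q^r (a coset of a linear subspace) with |S ∩ H_E|/|S| > τ·q/(q−1) satisfies S ⊆ H_{E⁺}. -/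
/-- Syndrome ball: set of syndromes of words of Hamming weight at most `E`. -/
def syndromeBall {F : Type} [Field F] [Fintype F] [DecidableEq F] {r n : ℕ}
    (H : Matrix (Fin r) (Fin n) F) (E : ℕ) : Set (Fin r → F) :=
  {s | ∃ x : Fin n → F, hammingNorm x ≤ E ∧ H.mulVec x = s}

/-- The affine line `{s₀ + α s₁ : α ∈ F}`. -/
def affLine {F : Type} [Field F] {r : ℕ} (s₀ s₁ : Fin r → F) : Set (Fin r → F) :=
  {t | ∃ α : F, t = s₀ + α • s₁}

/-- If `C = ker H` satisfies the `(E,E⁺,τ)`-line proximity-gap property, then it satisfies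
the `(E,E⁺,τ·q/(q−1))`-space proximity-gap property. -/
theorem stmt_1 {F : Type} [Field F] [Fintype F] [DecidableEq F] {r n : ℕ}
    (H : Matrix (Fin r) (Fin n) F) (E Ep : ℕ) (hEEp : E ≤ Ep) (hEpn : Ep ≤ n)
    (τ : ℝ) (hτ0 : 0 ≤ τ) (hτ1 : τ ≤ 1)
    (hline : ∀ s₀ s₁ : Fin r → F,
      τ < ((affLine s₀ s₁ ∩ syndromeBall H E).ncard : ℝ) / ((affLine s₀ s₁).ncard : ℝ) →
      affLine s₀ s₁ ⊆ syndromeBall H Ep) :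
    ∀ (W : Submodule F (Fin r → F)) (v : Fin r → F),
      τ * (Fintype.card F : ℝ) / ((Fintype.card F : ℝ) - 1) <
        (({t : Fin r → F | ∃ w ∈ W, t = v + w} ∩ syndromeBall H E).ncard : ℝ) /
          (({t : Fin r → F | ∃ w ∈ W, t = v + w}).ncard : ℝ) →
      {t : Fin r → F | ∃ w ∈ W, t = v + w} ⊆ syndromeBall H Ep := by
  classical
  intro W v hratio
  set S : Set (Fin r → F) := {t : Fin r → F | ∃ w ∈ W, t = v + w} with hSdef
  set G : Set (Fin r → F) := S ∩ syndromeBall H E with hGdef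
  intro t ht
  by_cases htE : t ∈ syndromeBall H E
  · obtain ⟨x, hx, hxs⟩ := htE
    exact ⟨x, hx.trans hEEp, hxs⟩
  by_contra htEp
  have hq2 : 2 ≤ Fintype.card F := Fintype.one_lt_card
  have hq0 : (0:ℝ) < (Fintype.card F : ℝ) := by positivity
  have hq1 : (0:ℝ) < (Fintype.card F : ℝ) - 1 := by
    have : (2:ℝ) ≤ (Fintype.card F : ℝ) := by exact_mod_cast hq2
    linarith
  obtain ⟨wt, hwt, htv⟩ := ht
  set P : Finset ((Fin r → F) × F) := G.toFinset ×ˢ (Finset.univ.erase (0:F)) with hP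
  set D : Finset (Fin r → F) := ((W : Set (Fin r → F)) \ {0}).toFinset with hD
  have hmem : ∀ p ∈ P, p.2 • (p.1 - t) ∈ D := by
    rintro ⟨g, α⟩ hp
    simp only [hP, Finset.mem_product, Set.mem_toFinset, Finset.mem_erase, Finset.mem_univ,
      and_true] at hp
    obtain ⟨hg, hα⟩ := hp
    obtain ⟨⟨wg, hwg, hgv⟩, hgE⟩ := hg
    simp only [hD, Set.mem_toFinset, Set.mem_diff, Set.mem_singleton_iff, SetLike.mem_coe]
    constructor
    · have hsub : g - t = wg - wt := by rw [hgv, htv]; abel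
      exact W.smul_mem α (hsub ▸ W.sub_mem hwg hwt)
    · intro h0
      rcases smul_eq_zero.mp h0 with h | h
      · exact hα h
      · exact htE ((sub_eq_zero.mp h) ▸ hgE)
  have hsum := Finset.card_eq_sum_card_fiberwise hmem
  have hfiber : ∀ d ∈ D, ((P.filter fun p => p.2 • (p.1 - t) = d).card : ℝ)
      ≤ τ * (Fintype.card F : ℝ) := by
    intro d hd
    simp only [hD, Set.mem_toFinset, Set.mem_diff, Set.mem_singleton_iff, SetLike.mem_coe] at hd
    obtain ⟨hdW, hd0⟩ := hd
    have hlinj : Function.Injective (fun α : F => t + α • d) := by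
      intro a b hab
      simp only [add_right_injective] at hab
      have : (a - b) • d = 0 := by
        rw [sub_smul, sub_eq_zero]
        exact add_left_cancel hab
      rcases smul_eq_zero.mp this with h | h
      · exact sub_eq_zero.mp h
      · exact absurd h hd0
    have hlcard : (affLine t d).ncard = Fintype.card F := by
      have hrange : affLine t d = Set.range (fun α : F => t + α • d) := by
        ext x
        simp only [affLine, Set.mem_setOf_eq, Set.mem_range, eq_comm]
      rw [hrange, ← Set.image_univ, Set.ncard_image_of_injective _ hlinj, Set.ncard_univ,
        Nat.card_eq_fintype_card]
    have hnl : ¬ (τ < ((affLine t d ∩ syndromeBall H E).ncard : ℝ) / ((affLine t d).ncard : ℝ)) := by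
      intro hlt
      exact htEp (hline t d hlt ⟨0, by simp⟩)
    push_neg at hnl
    rw [hlcard, div_le_iff₀ hq0] at hnl
    have hcle : (P.filter fun p => p.2 • (p.1 - t) = d).card
        ≤ (affLine t d ∩ syndromeBall H E).ncard := by
      rw [Set.ncard_eq_toFinset_card']
      apply Finset.card_le_card_of_injOn Prod.fst
      · rintro ⟨g, α⟩ hp
        simp only [Finset.mem_coe, Finset.mem_filter, hP, Finset.mem_product, Set.mem_toFinset,
          Finset.mem_erase, Finset.mem_univ, and_true] at hp
        obtain ⟨⟨hg, hα⟩, hfd⟩ := hp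
        simp only [Finset.mem_coe, Set.mem_toFinset, Set.mem_inter_iff]
        refine ⟨⟨α⁻¹, ?_⟩, hg.2⟩
        have : g - t = α⁻¹ • d := by
          rw [← hfd, smul_smul, inv_mul_cancel₀ hα, one_smul]
        rw [← this]; abel
      · rintro ⟨g, α⟩ hp ⟨g', α'⟩ hp' hgg
        simp only [Finset.mem_coe, Finset.mem_filter, hP, Finset.mem_product, Set.mem_toFinset,
          Finset.mem_erase, Finset.mem_univ, and_true] at hp hp'
        simp only at hgg
        subst hgg
        have hgt : g - t ≠ 0 := by
          intro h
          exact htE ((sub_eq_zero.mp h) ▸ hp.1.1.2)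
        have : (α - α') • (g - t) = 0 := by
          rw [sub_smul, hp.2, hp'.2, sub_self]
        rcases smul_eq_zero.mp this with h | h
        · exact Prod.ext rfl (sub_eq_zero.mp h)
        · exact absurd h hgt
    calc ((P.filter fun p => p.2 • (p.1 - t) = d).card : ℝ)
        ≤ ((affLine t d ∩ syndromeBall H E).ncard : ℝ) := by exact_mod_cast hcle
      _ ≤ τ * (Fintype.card F : ℝ) := hnl
  have htot : ((P.card : ℝ)) ≤ (D.card : ℝ) * (τ * (Fintype.card F : ℝ)) := by
    rw [hsum]
    push_cast
    calc (∑ d ∈ D, ((P.filter fun p => p.2 • (p.1 - t) = d).card : ℝ))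
        ≤ ∑ _d ∈ D, τ * (Fintype.card F : ℝ) := Finset.sum_le_sum hfiber
      _ = (D.card : ℝ) * (τ * (Fintype.card F : ℝ)) := by
          rw [Finset.sum_const, nsmul_eq_mul]
  have hPcard : P.card = G.ncard * (Fintype.card F - 1) := by
    rw [hP, Finset.card_product, Finset.card_erase_of_mem (Finset.mem_univ 0),
      Finset.card_univ, Set.ncard_eq_toFinset_card']
  have hScard : S.ncard = (W : Set (Fin r → F)).ncard := by
    have him : S = (fun w => v + w) '' (W : Set (Fin r → F)) := by
      ext x
      simp only [hSdef, Set.mem_setOf_eq, Set.mem_image, SetLike.mem_coe, eq_comm]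
    rw [him, Set.ncard_image_of_injective _ (add_right_injective v)]
  have hDle : (D.card : ℝ) ≤ (S.ncard : ℝ) := by
    have h1 : ((W : Set (Fin r → F)) \ {0}).ncard ≤ (W : Set (Fin r → F)).ncard :=
      Set.ncard_le_ncard Set.diff_subset (Set.toFinite _)
    have h2 : D.card = ((W : Set (Fin r → F)) \ {0}).ncard := by
      rw [hD, Set.ncard_eq_toFinset_card']
    rw [h2, hScard]
    exact_mod_cast h1
  have hSpos : 0 < S.ncard := by
    have : v ∈ S := ⟨0, W.zero_mem, by simp⟩
    exact (Set.ncard_pos (Set.toFinite _)).mpr ⟨v, this⟩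
  rw [div_lt_div_iff₀ hq1 (by exact_mod_cast hSpos)] at hratio
  have hGcast : ((G.ncard * (Fintype.card F - 1) : ℕ) : ℝ)
      = (G.ncard : ℝ) * ((Fintype.card F : ℝ) - 1) := by
    push_cast [Nat.cast_sub (le_of_lt (lt_of_lt_of_le one_lt_two hq2))]
    ring
  rw [hPcard, hGcast] at htot
  have hfin : (D.card : ℝ) * (τ * (Fintype.card F : ℝ))
      ≤ (S.ncard : ℝ) * (τ * (Fintype.card F : ℝ)) :=
    mul_le_mul_of_nonneg_right hDle (by positivity)
  nlinarith [hratio, htot, hfin]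
end

section
/- Let q be a prime power, H ∈ 𝔽_q^{r×n}, C = ker(H), 0 ≤ E ≤ n, and 0 ≤ τ ≤ 1. Assume that for every integer E′ with 0 ≤ E′ ≤ E, the code C has the (1,E′,E′,τ)-line correlated-agreement property: for every s₀, s₁ ∈ 𝔽_q^r with s₁ ≠ 0, if the affine line L = {s₀ + α s₁ : α ∈ 𝔽_q} satisfies |L ∩ H_{E′}|/q > τ, then there exists a matrix X = [x₀|x₁] ∈ 𝔽_q^{n×2} with Hx₀ = s₀, Hx₁ = s₁ and rowwt(X) ≤ E′. Assume further that for every x ∈ 𝔽_q^n, the number of codewords c ∈ C with d(x,c) ≤ E is strictly less than q. Then for every integer m ≥ 2, the code C has the (m,E,E,τ·q/(q−1))-space correlated-agreement property: for every affine syndrome space S = s₀ + span(s₁,…,s_m) ⊆ 𝔽_q^r with s₁,…,s_m linearly independent, if |S ∩ H_E|/|S| > τ·q/(q−1), then there exists a matrix X = [x₀|⋯|x_m] ∈ 𝔽_q^{n×(m+1)} with Hx_i = s_i for all 0 ≤ i ≤ m and rowwt(X) ≤ E. -/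
/-- The affine space `s₀ + span(s₁,…,s_m)`. -/
def affSpace {F : Type} [Field F] {r m : ℕ} (s₀ : Fin r → F) (s : Fin m → Fin r → F) :
    Set (Fin r → F) :=
  {t | ∃ β : Fin m → F, t = s₀ + ∑ i, β i • s i}

section helpers

variable {F : Type} [Field F] [Fintype F] [DecidableEq F] {r n : ℕ}

private lemma ncard_ne_zero (x : Fin n → F) :
    ({i : Fin n | x i ≠ 0} : Set (Fin n)).ncard = hammingNorm x := by
  classical
  rw [Set.ncard_eq_toFinset_card']
  simp [hammingNorm]

private lemma mem_ball_of_word (H : Matrix (Fin r) (Fin n) F) {E : ℕ} {x : Fin n → F}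
    (hx : hammingNorm x ≤ E) : H.mulVec x ∈ syndromeBall H E := ⟨x, hx, rfl⟩

end helpers
section main

set_option linter.unusedSectionVars false

variable {F : Type} [Field F] [Fintype F] [DecidableEq F] {r n : ℕ}

/-- the linear combination map -/
private def dmL {m : ℕ} (s : Fin m → Fin r → F) : (Fin m → F) →ₗ[F] (Fin r → F) where
  toFun γ := ∑ i, γ i • s i
  map_add' γ γ' := by
    simp only [Pi.add_apply, add_smul, Finset.sum_add_distrib]
  map_smul' c γ := by
    simp only [Pi.smul_apply, smul_eq_mul, RingHom.id_apply, Finset.smul_sum, smul_smul]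

private lemma dmL_eq_zero {m : ℕ} {s : Fin m → Fin r → F} (hs : LinearIndependent F s)
    {γ : Fin m → F} (h : dmL s γ = 0) : γ = 0 := by
  have := Fintype.linearIndependent_iff.mp hs γ h
  funext i; exact this i

private lemma dmL_single {m : ℕ} (s : Fin m → Fin r → F) (i : Fin m) :
    dmL s (Pi.single i 1) = s i := by
  classical
  simp only [dmL, LinearMap.coe_mk, AddHom.coe_mk]
  rw [Finset.sum_eq_single i]
  · simp
  · intro j _ hj; simp [Pi.single_eq_of_ne hj]
  · intro h; exact absurd (Finset.mem_univ i) h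

private lemma affSpace_eq_image {m : ℕ} (s₀ : Fin r → F) (s : Fin m → Fin r → F) :
    affSpace s₀ s = (fun γ => s₀ + dmL s γ) '' Set.univ := by
  ext t
  simp only [affSpace, Set.mem_setOf_eq, Set.image_univ, Set.mem_range, dmL,
    LinearMap.coe_mk, AddHom.coe_mk]
  exact ⟨fun ⟨β, h⟩ => ⟨β, h.symm⟩, fun ⟨β, h⟩ => ⟨β, h.symm⟩⟩

private lemma shift_inj {m : ℕ} {s : Fin m → Fin r → F} (hs : LinearIndependent F s)
    (z : Fin r → F) : Function.Injective (fun γ => z + dmL s γ) := by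
  intro γ γ' h
  simp only [add_right_inj] at h
  have : dmL s (γ - γ') = 0 := by rw [map_sub, h, sub_self]
  have h2 := dmL_eq_zero hs this
  exact sub_eq_zero.mp h2

private lemma card_affSpace {m : ℕ} (s₀ : Fin r → F) {s : Fin m → Fin r → F}
    (hs : LinearIndependent F s) : (affSpace s₀ s).ncard = Fintype.card F ^ m := by
  rw [affSpace_eq_image, Set.ncard_image_of_injective _ (shift_inj hs s₀), Set.ncard_univ]
  simp [Nat.card_eq_fintype_card]

end main
section stepone

set_option linter.unusedSectionVars false
set_option maxHeartbeats 1000000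

variable {F : Type} [Field F] [Fintype F] [DecidableEq F] {r n : ℕ}

private lemma dmL_apply {m : ℕ} (s : Fin m → Fin r → F) (γ : Fin m → F) :
    dmL s γ = ∑ i, γ i • s i := rfl

private theorem aff_subset_ball (H : Matrix (Fin r) (Fin n) F) (E : ℕ) (τ : ℝ) (hτ0 : 0 ≤ τ)
    (hline : ∀ s₀ s₁ : Fin r → F, s₁ ≠ 0 →
      τ < ((affLine s₀ s₁ ∩ syndromeBall H E).ncard : ℝ) / (Fintype.card F : ℝ) →
      ∃ x₀ x₁ : Fin n → F, H.mulVec x₀ = s₀ ∧ H.mulVec x₁ = s₁ ∧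
        ({i : Fin n | x₀ i ≠ 0 ∨ x₁ i ≠ 0}).ncard ≤ E)
    {m : ℕ} (s₀ : Fin r → F) (s : Fin m → Fin r → F) (hs : LinearIndependent F s)
    (hdens : τ * (Fintype.card F : ℝ) / ((Fintype.card F : ℝ) - 1) <
      ((affSpace s₀ s ∩ syndromeBall H E).ncard : ℝ) / ((affSpace s₀ s).ncard : ℝ)) :
    affSpace s₀ s ⊆ syndromeBall H E := by
  classical
  by_contra hcon
  rw [Set.not_subset] at hcon
  obtain ⟨z, hzS, hzB⟩ := hcon
  obtain ⟨βz, hβz⟩ := hzS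
  have hq1 : 1 < Fintype.card F := Fintype.one_lt_card
  have hq0R : (0:ℝ) < (Fintype.card F : ℝ) := by exact_mod_cast Nat.lt_of_lt_of_le Nat.zero_lt_one hq1.le
  set G : Finset (Fin m → F) :=
    Finset.univ.filter (fun γ => γ ≠ 0 ∧ (z + dmL s γ) ∈ syndromeBall H E) with hGdef
  have hshift : ∀ β : Fin m → F, z + dmL s (β - βz) = s₀ + ∑ i, β i • s i := by
    intro β
    rw [hβz, map_sub, dmL_apply, dmL_apply]
    abel
  -- N = G.card
  have himg : affSpace s₀ s ∩ syndromeBall H E = (fun γ => z + dmL s γ) '' (G : Set _) := by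
    ext t
    constructor
    · rintro ⟨⟨β, rfl⟩, htB⟩
      refine ⟨β - βz, ?_, hshift β⟩
      simp only [G, Finset.coe_filter, Set.mem_setOf_eq, Finset.mem_univ, true_and]
      refine ⟨?_, by rw [hshift β]; exact htB⟩
      intro h0
      apply hzB
      have : z = s₀ + ∑ i, β i • s i := by
        have := hshift β; rw [h0, map_zero, add_zero] at this; exact this
      rw [this]; exact htB
    · rintro ⟨γ, hγ, rfl⟩
      simp only [G, Finset.coe_filter, Set.mem_setOf_eq, Finset.mem_univ, true_and] at hγ
      exact ⟨⟨βz + γ, by rw [← hshift (βz + γ)]; simp⟩, hγ.2⟩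
  have hN : (affSpace s₀ s ∩ syndromeBall H E).ncard = G.card := by
    rw [himg, Set.ncard_image_of_injective _ (shift_inj hs z), Set.ncard_coe_finset]
  -- double counting
  have key2 : ∑ η : Fin m → F, (Finset.univ.filter (fun lam : F => lam • η ∈ G)).card
      = (Fintype.card F - 1) * G.card := by
    have swap : ∑ η : Fin m → F, (Finset.univ.filter (fun lam : F => lam • η ∈ G)).card
        = ∑ lam : F, (Finset.univ.filter (fun η : Fin m → F => lam • η ∈ G)).card := by
      simp only [Finset.card_filter]
      exact Finset.sum_comm
    rw [swap]
    have hzero : ∀ γ : Fin m → F, γ ∈ G → γ ≠ 0 := by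
      intro γ hγ
      exact ((Finset.mem_filter.mp hγ).2).1
    have h0 : (Finset.univ.filter (fun η : Fin m → F => (0:F) • η ∈ G)).card = 0 := by
      rw [Finset.card_eq_zero]
      apply Finset.filter_false_of_mem
      intro η _
      rw [zero_smul]
      intro h
      exact hzero 0 h rfl
    have hlam : ∀ lam : F, lam ≠ 0 →
        (Finset.univ.filter (fun η : Fin m → F => lam • η ∈ G)).card = G.card := by
      intro lam hl
      apply Finset.card_bij (fun η _ => lam • η)
      · intro η hη
        exact (Finset.mem_filter.mp hη).2
      · intro a ha b hb h
        exact smul_right_injective (Fin m → F) hl h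
      · intro γ hγ
        refine ⟨lam⁻¹ • γ, ?_, ?_⟩
        · rw [Finset.mem_filter]
          refine ⟨Finset.mem_univ _, ?_⟩
          rw [smul_smul, mul_inv_cancel₀ hl, one_smul]
          exact hγ
        · rw [smul_smul, mul_inv_cancel₀ hl, one_smul]
    rw [← Finset.add_sum_erase _ _ (Finset.mem_univ (0:F)), h0, zero_add]
    rw [Finset.sum_congr rfl (fun lam hl => hlam lam (Finset.ne_of_mem_erase hl))]
    rw [Finset.sum_const, Finset.card_erase_of_mem (Finset.mem_univ _), Finset.card_univ,
      smul_eq_mul]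
  -- per-direction bound
  have key3 : ∀ η : Fin m → F, η ≠ 0 →
      ((Finset.univ.filter (fun lam : F => lam • η ∈ G)).card : ℝ) ≤ τ * (Fintype.card F : ℝ) := by
    intro η hη
    have hdη : dmL s η ≠ 0 := fun h => hη (dmL_eq_zero hs h)
    have hinj2 : Function.Injective (fun lam : F => z + lam • dmL s η) := by
      intro a b hab
      simp only [add_right_inj] at hab
      have : (a - b) • dmL s η = 0 := by rw [sub_smul, hab, sub_self]
      rcases smul_eq_zero.mp this with h | h
      · exact sub_eq_zero.mp h
      · exact absurd h hdη
    have hmap : ((Finset.univ.filter (fun lam : F => lam • η ∈ G)).card : ℕ)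
        ≤ (affLine z (dmL s η) ∩ syndromeBall H E).ncard := by
      have himg2 : (fun lam : F => z + lam • dmL s η) ''
          ((Finset.univ.filter (fun lam : F => lam • η ∈ G)) : Set F)
          ⊆ affLine z (dmL s η) ∩ syndromeBall H E := by
        rintro t ⟨lam, hlam, rfl⟩
        simp only [Finset.coe_filter, Set.mem_setOf_eq, Finset.mem_univ, true_and] at hlam
        have hG2 := (Finset.mem_filter.mp hlam).2
        refine ⟨⟨lam, rfl⟩, ?_⟩
        have := hG2.2
        rwa [map_smul] at this
      calc (Finset.univ.filter (fun lam : F => lam • η ∈ G)).card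
          = ((fun lam : F => z + lam • dmL s η) ''
            ((Finset.univ.filter (fun lam : F => lam • η ∈ G)) : Set F)).ncard := by
            rw [Set.ncard_image_of_injective _ hinj2, Set.ncard_coe_finset]
        _ ≤ _ := Set.ncard_le_ncard himg2 (Set.toFinite _)
    have hno : ¬ (τ < ((affLine z (dmL s η) ∩ syndromeBall H E).ncard : ℝ) / (Fintype.card F : ℝ)) := by
      intro hlt
      obtain ⟨a, b, ha, hb, hw⟩ := hline z (dmL s η) hdη hlt
      apply hzB
      rw [← ha]
      apply mem_ball_of_word
      calc hammingNorm a = ({i : Fin n | a i ≠ 0}).ncard := (ncard_ne_zero a).symm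
        _ ≤ ({i : Fin n | a i ≠ 0 ∨ b i ≠ 0}).ncard :=
            Set.ncard_le_ncard (fun i h => Or.inl h) (Set.toFinite _)
        _ ≤ E := hw
    push_neg at hno
    have := (div_le_iff₀ hq0R).mp hno
    calc ((Finset.univ.filter (fun lam : F => lam • η ∈ G)).card : ℝ)
        ≤ ((affLine z (dmL s η) ∩ syndromeBall H E).ncard : ℝ) := by exact_mod_cast hmap
      _ ≤ τ * (Fintype.card F : ℝ) := this
  -- combine
  have hcard_m : (1:ℕ) ≤ Fintype.card F ^ m := Nat.one_le_pow _ _ (Nat.lt_of_lt_of_le Nat.zero_lt_one hq1.le)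
  have hsum : (((Fintype.card F - 1) * G.card : ℕ) : ℝ)
      ≤ ((Fintype.card F ^ m : ℝ) - 1) * (τ * (Fintype.card F : ℝ)) := by
    rw [← key2]
    push_cast
    have h0' : ((Finset.univ.filter (fun lam : F => lam • (0 : Fin m → F) ∈ G)).card : ℝ) = 0 := by
      norm_cast
      rw [Finset.card_eq_zero]
      apply Finset.filter_false_of_mem
      intro lam _
      rw [smul_zero]
      intro h
      exact ((Finset.mem_filter.mp h).2).1 rfl
    rw [← Finset.add_sum_erase _ (fun η => ((Finset.univ.filter (fun lam : F => lam • η ∈ G)).card : ℝ)) (Finset.mem_univ (0 : Fin m → F)), h0', zero_add]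
    calc ∑ η ∈ Finset.univ.erase (0 : Fin m → F),
          ((Finset.univ.filter (fun lam : F => lam • η ∈ G)).card : ℝ)
        ≤ ∑ _η ∈ Finset.univ.erase (0 : Fin m → F), (τ * (Fintype.card F : ℝ)) := by
          apply Finset.sum_le_sum
          intro η hη
          exact key3 η (Finset.ne_of_mem_erase hη)
      _ = ((Fintype.card F ^ m : ℝ) - 1) * (τ * (Fintype.card F : ℝ)) := by
          rw [Finset.sum_const, Finset.card_erase_of_mem (Finset.mem_univ _), Finset.card_univ]
          have : (Fintype.card (Fin m → F)) = Fintype.card F ^ m := by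
            simp [Fintype.card_fun]
          rw [this, nsmul_eq_mul]
          congr 1
          push_cast [Nat.cast_sub hcard_m]
          ring
  -- density
  rw [hN, card_affSpace s₀ hs] at hdens
  have hq1R : (1:ℝ) < (Fintype.card F : ℝ) := by exact_mod_cast hq1
  have hpm : (0:ℝ) < (Fintype.card F : ℝ) ^ m := by positivity
  rw [div_lt_div_iff₀ (by linarith) (by exact_mod_cast hpm)] at hdens
  -- hdens : τ * q * q^m < G.card * (q - 1)
  have hsum' : ((Fintype.card F : ℝ) - 1) * (G.card : ℝ)
      ≤ ((Fintype.card F : ℝ)^m - 1) * (τ * (Fintype.card F : ℝ)) := by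
    have := hsum
    push_cast [Nat.cast_sub hq1.le] at this
    convert this using 2 <;> push_cast <;> ring
  have hτq : (0:ℝ) ≤ τ * (Fintype.card F : ℝ) := mul_nonneg hτ0 hq0R.le
  push_cast at hdens
  nlinarith [hdens, hsum', hτq]

end stepone
section stepfour

set_option linter.unusedSectionVars false
set_option maxHeartbeats 1000000

variable {F : Type} [Field F] [Fintype F] [DecidableEq F] {r n : ℕ}

private lemma shift_mem {m : ℕ} (s₀ : Fin r → F) (s : Fin m → Fin r → F) (β γ : Fin m → F)
    (α : F) : (s₀ + ∑ i, β i • s i) + α • dmL s γ = s₀ + ∑ i, (β + α • γ) i • s i := by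
  rw [dmL_apply, Finset.smul_sum, add_assoc, ← Finset.sum_add_distrib]
  congr 1
  apply Finset.sum_congr rfl
  intro i _
  simp [add_smul, smul_smul]

private lemma ncard_affLine {z v : Fin r → F} (hv : v ≠ 0) :
    (affLine z v).ncard = Fintype.card F := by
  classical
  have hinj : Function.Injective (fun α : F => z + α • v) := by
    intro a b hab
    simp only [add_right_inj] at hab
    have : (a - b) • v = 0 := by rw [sub_smul, hab, sub_self]
    rcases smul_eq_zero.mp this with h | h
    · exact sub_eq_zero.mp h
    · exact absurd h hv
  have : affLine z v = (fun α : F => z + α • v) '' Set.univ := by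
    ext t
    simp only [affLine, Set.mem_setOf_eq, Set.image_univ, Set.mem_range]
    exact ⟨fun ⟨α, h⟩ => ⟨α, h.symm⟩, fun ⟨α, h⟩ => ⟨α, h.symm⟩⟩
  rw [this, Set.ncard_image_of_injective _ hinj, Set.ncard_univ, Nat.card_eq_fintype_card]

private theorem step4 (H : Matrix (Fin r) (Fin n) F) (E : ℕ) (τ : ℝ) (hτ1 : τ < 1)
    (hline : ∀ s₀ s₁ : Fin r → F, s₁ ≠ 0 →
      τ < ((affLine s₀ s₁ ∩ syndromeBall H E).ncard : ℝ) / (Fintype.card F : ℝ) →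
      ∃ x₀ x₁ : Fin n → F, H.mulVec x₀ = s₀ ∧ H.mulVec x₁ = s₁ ∧
        ({i : Fin n | x₀ i ≠ 0 ∨ x₁ i ≠ 0}).ncard ≤ E)
    (hlist : ∀ x : Fin n → F,
      ({c : Fin n → F | H.mulVec c = 0 ∧ hammingDist x c ≤ E}).ncard < Fintype.card F)
    {m : ℕ} (hm : 1 ≤ m) (s₀ : Fin r → F) (s : Fin m → Fin r → F) (hs : LinearIndependent F s)
    (hsub : affSpace s₀ s ⊆ syndromeBall H E)
    (p : Fin r → F) (hpS : p ∈ affSpace s₀ s)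
    (hp : ∀ x : Fin n → F, H.mulVec x = p → E ≤ hammingNorm x) :
    ∃ x : Fin (m + 1) → Fin n → F,
      H.mulVec (x 0) = s₀ ∧ (∀ i : Fin m, H.mulVec (x i.succ) = s i) ∧
      ({i : Fin n | ∃ j, x j i ≠ 0}).ncard ≤ E := by
  classical
  obtain ⟨βp, hβp⟩ := hpS
  have hq1 : 1 < Fintype.card F := Fintype.one_lt_card
  have hq0R : (0:ℝ) < (Fintype.card F : ℝ) := by
    exact_mod_cast Nat.lt_of_lt_of_le Nat.zero_lt_one hq1.le
  -- every line through p inside the space is fully in the ball, giving a pair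
  have hfull : ∀ γ : Fin m → F, γ ≠ 0 → ∃ ab : (Fin n → F) × (Fin n → F),
      H.mulVec ab.1 = p ∧ H.mulVec ab.2 = dmL s γ ∧
      ({i : Fin n | ab.1 i ≠ 0 ∨ ab.2 i ≠ 0}).ncard ≤ E := by
    intro γ hγ
    have hdγ : dmL s γ ≠ 0 := fun h => hγ (dmL_eq_zero hs h)
    have hlsub : affLine p (dmL s γ) ⊆ affSpace s₀ s := by
      rintro t ⟨α, rfl⟩
      refine ⟨βp + α • γ, ?_⟩
      rw [hβp, shift_mem]
    have hinter : affLine p (dmL s γ) ∩ syndromeBall H E = affLine p (dmL s γ) :=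
      Set.inter_eq_self_of_subset_left (fun t ht => hsub (hlsub ht))
    obtain ⟨a, b, h1, h2, h3⟩ := hline p (dmL s γ) hdγ (by
      rw [hinter, ncard_affLine hdγ, div_self (ne_of_gt hq0R)]
      exact hτ1)
    exact ⟨(a, b), h1, h2, h3⟩
  set aW : (Fin m → F) → (Fin n → F) :=
    fun γ => if h : γ ≠ 0 then (hfull γ h).choose.1 else 0 with haWdef
  set bW : (Fin m → F) → (Fin n → F) :=
    fun γ => if h : γ ≠ 0 then (hfull γ h).choose.2 else 0 with hbWdef
  set L : Set (Fin n → F) := {x | H.mulVec x = p ∧ hammingNorm x ≤ E} with hLdef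
  have haW : ∀ γ : Fin m → F, γ ≠ 0 → aW γ ∈ L ∧ H.mulVec (bW γ) = dmL s γ ∧
      {i : Fin n | bW γ i ≠ 0} ⊆ {i : Fin n | aW γ i ≠ 0} := by
    intro γ h
    have hspec := (hfull γ h).choose_spec
    have ea : aW γ = (hfull γ h).choose.1 := by rw [haWdef]; simp [h]
    have eb : bW γ = (hfull γ h).choose.2 := by rw [hbWdef]; simp [h]
    rw [ea, eb]
    obtain ⟨h1, h2, h3⟩ := hspec
    have hnorm_le : hammingNorm (hfull γ h).choose.1 ≤ E := by
      calc hammingNorm (hfull γ h).choose.1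
          = ({i : Fin n | (hfull γ h).choose.1 i ≠ 0}).ncard := (ncard_ne_zero _).symm
        _ ≤ ({i : Fin n | (hfull γ h).choose.1 i ≠ 0 ∨ (hfull γ h).choose.2 i ≠ 0}).ncard :=
            Set.ncard_le_ncard (fun i hi => Or.inl hi) (Set.toFinite _)
        _ ≤ E := h3
    refine ⟨⟨h1, hnorm_le⟩, h2, ?_⟩
    have hEnorm : E ≤ hammingNorm (hfull γ h).choose.1 := hp _ h1
    have heq : {i : Fin n | (hfull γ h).choose.1 i ≠ 0}
        = {i : Fin n | (hfull γ h).choose.1 i ≠ 0 ∨ (hfull γ h).choose.2 i ≠ 0} := by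
      refine Set.eq_of_subset_of_ncard_le (fun i hi => Or.inl hi) ?_ (Set.toFinite _)
      calc ({i : Fin n | (hfull γ h).choose.1 i ≠ 0 ∨ (hfull γ h).choose.2 i ≠ 0}).ncard
          ≤ E := h3
        _ ≤ hammingNorm (hfull γ h).choose.1 := hEnorm
        _ = ({i : Fin n | (hfull γ h).choose.1 i ≠ 0}).ncard := (ncard_ne_zero _).symm
    intro i hi
    have : i ∈ {i : Fin n | (hfull γ h).choose.1 i ≠ 0 ∨ (hfull γ h).choose.2 i ≠ 0} :=
      Or.inr hi
    rw [← heq] at this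
    exact this
  -- list bound
  have hLcard : L.ncard ≤ Fintype.card F - 1 := by
    have hγ1 : ((fun _ => 1 : Fin m → F)) ≠ 0 := by
      intro h
      have := congrFun h ⟨0, hm⟩
      exact one_ne_zero this
    set a₀ := aW (fun _ => 1) with ha₀def
    have ha₀ : H.mulVec a₀ = p := ((haW _ hγ1).1).1
    have hinj : Set.InjOn (fun x => a₀ - x) L := by
      intro x _ y _ hxy
      simp only [sub_right_inj] at hxy
      exact hxy
    have himg : (fun x => a₀ - x) '' L ⊆ {c : Fin n → F | H.mulVec c = 0 ∧ hammingDist a₀ c ≤ E} := by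
      rintro c ⟨x, hx, rfl⟩
      constructor
      · have : H.mulVec (a₀ - x) = H.mulVec a₀ - H.mulVec x := by
          simp only [← Matrix.mulVecLin_apply, map_sub]
        rw [this, ha₀, hx.1, sub_self]
      · have h2 : a₀ - (a₀ - x) = x := sub_sub_cancel a₀ x
        calc hammingDist a₀ (a₀ - x) = hammingNorm (a₀ - (a₀ - x)) :=
            (by rw [hammingDist_comm, hammingDist_eq_hammingNorm]; congr 1; abel)
          _ = hammingNorm x := by rw [h2]
          _ ≤ E := hx.2
    have : L.ncard ≤ ({c : Fin n → F | H.mulVec c = 0 ∧ hammingDist a₀ c ≤ E}).ncard := by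
      calc L.ncard = ((fun x => a₀ - x) '' L).ncard := (Set.ncard_image_of_injOn hinj).symm
        _ ≤ _ := Set.ncard_le_ncard himg (Set.toFinite _)
    have hlt := hlist a₀
    omega
  -- pigeonhole with spanning class
  have hKspan : ∃ x ∈ L, ∀ i : Fin m, (Pi.single i 1 : Fin m → F) ∈
      Submodule.span F {γ : Fin m → F | γ ≠ 0 ∧ aW γ = x} := by
    by_contra hno
    push_neg at hno
    have hqpos : 0 < Fintype.card F := by omega
    have hbound : ∀ x ∈ L, ({γ : Fin m → F | γ ≠ 0 ∧ aW γ = x}).ncard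
        ≤ Fintype.card F ^ (m-1) - 1 := by
      intro x hx
      obtain ⟨i, hi⟩ := hno x hx
      set U := Submodule.span F {γ : Fin m → F | γ ≠ 0 ∧ aW γ = x} with hUdef
      have hUtop : U ≠ ⊤ := by
        intro h
        rw [h] at hi
        exact hi Submodule.mem_top
      have hrank : Module.finrank F U < m := by
        have := Submodule.finrank_lt (K := F) (V := Fin m → F) hUtop
        rwa [Module.finrank_pi, Fintype.card_fin] at this
      have hcardU : Nat.card U ≤ Fintype.card F ^ (m-1) := by
        have hce : Fintype.card U = Fintype.card F ^ (Module.finrank F U) :=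
          Module.card_eq_pow_finrank
        rw [Nat.card_eq_fintype_card, hce]
        exact Nat.pow_le_pow_right hqpos (by omega)
      have hsubU : {γ : Fin m → F | γ ≠ 0 ∧ aW γ = x} ⊆ (U : Set (Fin m → F)) \ {0} := by
        intro γ hγ
        exact ⟨Submodule.subset_span hγ, hγ.1⟩
      calc ({γ : Fin m → F | γ ≠ 0 ∧ aW γ = x}).ncard
          ≤ ((U : Set (Fin m → F)) \ {0}).ncard := Set.ncard_le_ncard hsubU (Set.toFinite _)
        _ = (U : Set (Fin m → F)).ncard - 1 := by
            rw [Set.ncard_diff_singleton_of_mem (Submodule.zero_mem U)]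
        _ ≤ Fintype.card F ^ (m-1) - 1 := by
            have he : (U : Set (Fin m → F)).ncard = Nat.card U := by
              rw [← Nat.card_coe_set_eq]
              rfl
            omega
    -- cover counting
    have hcover : (Finset.univ.filter (fun γ : Fin m → F => γ ≠ 0)) ⊆
        (L.toFinite.toFinset).biUnion
          (fun x => ({γ : Fin m → F | γ ≠ 0 ∧ aW γ = x}).toFinite.toFinset) := by
      intro γ hγ
      have hγ0 : γ ≠ 0 := (Finset.mem_filter.mp hγ).2
      rw [Finset.mem_biUnion]
      refine ⟨aW γ, ?_, ?_⟩
      · rw [Set.Finite.mem_toFinset]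
        exact (haW γ hγ0).1
      · rw [Set.Finite.mem_toFinset]
        exact ⟨hγ0, rfl⟩
    have hcount := Finset.card_le_card hcover
    have hcount2 := Finset.card_biUnion_le (s := L.toFinite.toFinset)
      (t := fun x => ({γ : Fin m → F | γ ≠ 0 ∧ aW γ = x}).toFinite.toFinset)
    have hfilter : (Finset.univ.filter (fun γ : Fin m → F => γ ≠ 0)).card
        = Fintype.card F ^ m - 1 := by
      rw [Finset.filter_ne' Finset.univ (0 : Fin m → F),
        Finset.card_erase_of_mem (Finset.mem_univ _), Finset.card_univ]
      congr 1
      simp [Fintype.card_fun]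
    have hsumle : ∑ x ∈ L.toFinite.toFinset,
        (({γ : Fin m → F | γ ≠ 0 ∧ aW γ = x}).toFinite.toFinset).card
        ≤ (L.toFinite.toFinset).card * (Fintype.card F ^ (m-1) - 1) := by
      apply Finset.sum_le_card_nsmul
      intro x hx
      rw [← Set.ncard_eq_toFinset_card _ (Set.toFinite _)]
      exact hbound x (by rwa [Set.Finite.mem_toFinset] at hx)
    have hLfin : (L.toFinite.toFinset).card = L.ncard := (Set.ncard_eq_toFinset_card _ _).symm
    -- final arithmetic contradiction
    obtain ⟨m', rfl⟩ : ∃ m', m = m' + 1 := ⟨m - 1, by omega⟩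
    have hQ : 1 ≤ Fintype.card F ^ m' := Nat.one_le_pow _ _ hqpos
    have hfin : Fintype.card F ^ (m' + 1) - 1
        ≤ (Fintype.card F - 1) * (Fintype.card F ^ (m' + 1 - 1) - 1) := by
      calc Fintype.card F ^ (m' + 1) - 1 = (Finset.univ.filter (fun γ : Fin (m' + 1) → F => γ ≠ 0)).card := hfilter.symm
        _ ≤ _ := le_trans hcount (le_trans hcount2 hsumle)
        _ ≤ (Fintype.card F - 1) * (Fintype.card F ^ (m' + 1 - 1) - 1) := by
            apply Nat.mul_le_mul_right
            rw [hLfin]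
            exact hLcard
    simp only [Nat.add_sub_cancel] at hfin
    have hpow : Fintype.card F ^ (m' + 1) = Fintype.card F * Fintype.card F ^ m' := by
      rw [pow_succ]
      ring
    rw [hpow] at hfin
    zify [hq1.le, hQ, Nat.one_le_iff_ne_zero.mpr (by positivity : Fintype.card F * Fintype.card F ^ m' ≠ 0)] at hfin
    nlinarith [hfin, hQ, hq1]
  obtain ⟨astar, hastarL, hspan⟩ := hKspan
  set K : Set (Fin m → F) := {γ : Fin m → F | γ ≠ 0 ∧ aW γ = astar} with hKdef
  -- vanishing off the support of astar
  have hbvan : ∀ u ∈ Submodule.span F (bW '' K), ∀ i : Fin n, astar i = 0 → u i = 0 := by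
    intro u hu
    induction hu using Submodule.span_induction with
    | mem x hx =>
        obtain ⟨γ, hγK, rfl⟩ := hx
        intro i hi
        by_contra hne
        have hsupp := (haW γ hγK.1).2.2 hne
        rw [hγK.2] at hsupp
        exact hsupp hi
    | zero => intro i _; rfl
    | add x y _ _ hx hy => intro i hi; simp [Pi.add_apply, hx i hi, hy i hi]
    | smul c x _ hx => intro i hi; simp [Pi.smul_apply, hx i hi]
  -- witnesses for the generators
  have hsi : ∀ i : Fin m, ∃ v, v ∈ Submodule.span F (bW '' K) ∧ H.mulVec v = s i := by
    intro i
    have h1 : s i ∈ Submodule.map (dmL s) (Submodule.span F K) := by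
      rw [← dmL_single s i]
      exact Submodule.mem_map_of_mem (hspan i)
    rw [Submodule.map_span] at h1
    have hle : Submodule.span F (dmL s '' K) ≤
        Submodule.map H.mulVecLin (Submodule.span F (bW '' K)) := by
      rw [Submodule.span_le]
      rintro v ⟨γ, hγK, rfl⟩
      refine ⟨bW γ, Submodule.subset_span ⟨γ, hγK, rfl⟩, ?_⟩
      rw [Matrix.mulVecLin_apply]
      exact (haW γ hγK.1).2.1
    obtain ⟨v, hv, hveq⟩ := Submodule.mem_map.mp (hle h1)
    refine ⟨v, hv, ?_⟩
    rw [← Matrix.mulVecLin_apply]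
    exact hveq
  choose u huspan husynd using hsi
  refine ⟨Fin.cases (astar - ∑ i, βp i • u i) u, ?_, ?_, ?_⟩
  · show H.mulVec (astar - ∑ i, βp i • u i) = s₀
    have hHa : H.mulVec astar = p := hastarL.1
    have hcomp : H.mulVec (astar - ∑ i, βp i • u i) = p - ∑ i, βp i • s i := by
      simp only [← Matrix.mulVecLin_apply, map_sub, map_sum, map_smul]
      simp only [Matrix.mulVecLin_apply, hHa, husynd]
    rw [hcomp, hβp]
    abel
  · intro i
    show H.mulVec (u i) = s i
    exact husynd i
  · have hss : {i : Fin n |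
        ∃ j, (Fin.cases (astar - ∑ k, βp k • u k) u : Fin (m+1) → Fin n → F) j i ≠ 0}
        ⊆ {i : Fin n | astar i ≠ 0} := by
      intro i hi
      simp only [Set.mem_setOf_eq] at hi ⊢
      obtain ⟨j, hj⟩ := hi
      intro h0
      apply hj
      induction j using Fin.cases with
      | zero =>
          show (astar - ∑ k, βp k • u k) i = 0
          have hk : ∀ k : Fin m, u k i = 0 := fun k => hbvan (u k) (huspan k) i h0
          simp [Pi.sub_apply, Finset.sum_apply, Pi.smul_apply, h0, hk]
      | succ jj =>
          show u jj i = 0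
          exact hbvan (u jj) (huspan jj) i h0
    calc ({i : Fin n |
        ∃ j, (Fin.cases (astar - ∑ k, βp k • u k) u : Fin (m+1) → Fin n → F) j i ≠ 0}).ncard
        ≤ ({i : Fin n | astar i ≠ 0}).ncard := Set.ncard_le_ncard hss (Set.toFinite _)
      _ = hammingNorm astar := ncard_ne_zero astar
      _ ≤ E := hastarL.2

end stepfour
section final

set_option linter.unusedSectionVars false
set_option maxHeartbeats 1000000

variable {F : Type} [Field F] [Fintype F] [DecidableEq F] {r n : ℕ}

private theorem aux_main (E : ℕ) :
    ∀ (H : Matrix (Fin r) (Fin n) F) (τ : ℝ), 0 ≤ τ →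
    (∀ E' : ℕ, E' ≤ E → ∀ s₀ s₁ : Fin r → F, s₁ ≠ 0 →
      τ < ((affLine s₀ s₁ ∩ syndromeBall H E').ncard : ℝ) / (Fintype.card F : ℝ) →
      ∃ x₀ x₁ : Fin n → F, H.mulVec x₀ = s₀ ∧ H.mulVec x₁ = s₁ ∧
        ({i : Fin n | x₀ i ≠ 0 ∨ x₁ i ≠ 0}).ncard ≤ E') →
    (∀ x : Fin n → F,
      ({c : Fin n → F | H.mulVec c = 0 ∧ hammingDist x c ≤ E}).ncard < Fintype.card F) →
    ∀ m : ℕ, 1 ≤ m → ∀ (s₀ : Fin r → F) (s : Fin m → Fin r → F), LinearIndependent F s →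
      τ * (Fintype.card F : ℝ) / ((Fintype.card F : ℝ) - 1) <
        ((affSpace s₀ s ∩ syndromeBall H E).ncard : ℝ) / ((affSpace s₀ s).ncard : ℝ) →
      ∃ x : Fin (m + 1) → Fin n → F,
        H.mulVec (x 0) = s₀ ∧ (∀ i : Fin m, H.mulVec (x i.succ) = s i) ∧
        ({i : Fin n | ∃ j, x j i ≠ 0}).ncard ≤ E := by
  induction E with
  | zero =>
      intro H τ hτ0 hline hlist m hm s₀ s hs hdens
      exfalso
      have hsub := aff_subset_ball H 0 τ hτ0 (hline 0 le_rfl) s₀ s hs hdens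
      have h0 : ∀ t ∈ affSpace s₀ s, t = 0 := by
        intro t ht
        obtain ⟨x, hx, hxt⟩ := hsub ht
        have hx0 : x = 0 := hammingNorm_eq_zero.mp (Nat.le_zero.mp hx)
        rw [← hxt, hx0, Matrix.mulVec_zero]
      have h1 : s₀ ∈ affSpace s₀ s := ⟨0, by simp⟩
      set i0 : Fin m := ⟨0, hm⟩ with hi0
      have h2 : s₀ + s i0 ∈ affSpace s₀ s := by
        refine ⟨Pi.single i0 1, ?_⟩
        have := dmL_single s i0
        rw [dmL_apply] at this
        rw [this]
      have e1 := h0 _ h1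
      have e2 := h0 _ h2
      rw [e1, zero_add] at e2
      exact hs.ne_zero i0 e2
  | succ E ih =>
      intro H τ hτ0 hline hlist m hm s₀ s hs hdens
      have hsub := aff_subset_ball H (E+1) τ hτ0 (hline (E+1) le_rfl) s₀ s hs hdens
      have hq1 : 1 < Fintype.card F := Fintype.one_lt_card
      have hq1R : (1:ℝ) < (Fintype.card F : ℝ) := by exact_mod_cast hq1
      have hdenpos : (0:ℝ) < ((affSpace s₀ s).ncard : ℝ) := by
        rw [card_affSpace s₀ hs]
        positivity
      have hratio_le : ((affSpace s₀ s ∩ syndromeBall H (E+1)).ncard : ℝ)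
          / ((affSpace s₀ s).ncard : ℝ) ≤ 1 := by
        apply div_le_one_of_le₀
        · exact_mod_cast Set.ncard_le_ncard Set.inter_subset_left (Set.toFinite _)
        · exact hdenpos.le
      have hτ'1 : τ * (Fintype.card F : ℝ) / ((Fintype.card F : ℝ) - 1) < 1 :=
        lt_of_lt_of_le hdens hratio_le
      have hτ1 : τ < 1 := by
        rw [div_lt_one (by linarith)] at hτ'1
        have hqpos : (0:ℝ) < (Fintype.card F : ℝ) := by linarith
        nlinarith [hτ'1, hqpos]
      by_cases hcase : ∀ t ∈ affSpace s₀ s, ∃ x : Fin n → F, hammingNorm x ≤ E ∧ H.mulVec x = t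
      · have hsubE : affSpace s₀ s ⊆ syndromeBall H E := fun t ht => hcase t ht
        have hinter : affSpace s₀ s ∩ syndromeBall H E = affSpace s₀ s :=
          Set.inter_eq_self_of_subset_left hsubE
        have hdens' : τ * (Fintype.card F : ℝ) / ((Fintype.card F : ℝ) - 1) <
            ((affSpace s₀ s ∩ syndromeBall H E).ncard : ℝ) / ((affSpace s₀ s).ncard : ℝ) := by
          rw [hinter, div_self (ne_of_gt hdenpos)]
          exact hτ'1
        have hline' : ∀ E' : ℕ, E' ≤ E → ∀ s₀ s₁ : Fin r → F, s₁ ≠ 0 →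
            τ < ((affLine s₀ s₁ ∩ syndromeBall H E').ncard : ℝ) / (Fintype.card F : ℝ) →
            ∃ x₀ x₁ : Fin n → F, H.mulVec x₀ = s₀ ∧ H.mulVec x₁ = s₁ ∧
              ({i : Fin n | x₀ i ≠ 0 ∨ x₁ i ≠ 0}).ncard ≤ E' :=
          fun E' hE' => hline E' (le_trans hE' (Nat.le_succ E))
        have hlist' : ∀ x : Fin n → F,
            ({c : Fin n → F | H.mulVec c = 0 ∧ hammingDist x c ≤ E}).ncard < Fintype.card F := by
          intro x
          refine lt_of_le_of_lt ?_ (hlist x)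
          apply Set.ncard_le_ncard ?_ (Set.toFinite _)
          intro c hc
          exact ⟨hc.1, le_trans hc.2 (Nat.le_succ E)⟩
        obtain ⟨x, h1, h2, h3⟩ := ih H τ hτ0 hline' hlist' m hm s₀ s hs hdens'
        exact ⟨x, h1, h2, le_trans h3 (Nat.le_succ E)⟩
      · push_neg at hcase
        obtain ⟨p, hpS, hp⟩ := hcase
        have hp' : ∀ x : Fin n → F, H.mulVec x = p → E + 1 ≤ hammingNorm x := by
          intro x hx
          by_contra hlt
          push_neg at hlt
          exact hp x (Nat.lt_succ_iff.mp hlt) hx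
        exact step4 H (E+1) τ hτ1 (hline (E+1) le_rfl) hlist hm s₀ s hs hsub p hpS hp'

end final

/-- Line correlated agreement (at all radii up to `E`), together with a list-size bound,
implies `m`-space correlated agreement with threshold `τ·q/(q−1)`. -/
theorem stmt_2 {F : Type} [Field F] [Fintype F] [DecidableEq F] {r n : ℕ}
    (H : Matrix (Fin r) (Fin n) F) (E : ℕ) (hEn : E ≤ n)
    (τ : ℝ) (hτ0 : 0 ≤ τ) (hτ1 : τ ≤ 1)
    (hline : ∀ E' : ℕ, E' ≤ E → ∀ s₀ s₁ : Fin r → F, s₁ ≠ 0 →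
      τ < ((affLine s₀ s₁ ∩ syndromeBall H E').ncard : ℝ) / (Fintype.card F : ℝ) →
      ∃ x₀ x₁ : Fin n → F, H.mulVec x₀ = s₀ ∧ H.mulVec x₁ = s₁ ∧
        ({i : Fin n | x₀ i ≠ 0 ∨ x₁ i ≠ 0}).ncard ≤ E')
    (hlist : ∀ x : Fin n → F,
      ({c : Fin n → F | H.mulVec c = 0 ∧ hammingDist x c ≤ E}).ncard < Fintype.card F) :
    ∀ m : ℕ, 2 ≤ m → ∀ (s₀ : Fin r → F) (s : Fin m → Fin r → F), LinearIndependent F s →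
      τ * (Fintype.card F : ℝ) / ((Fintype.card F : ℝ) - 1) <
        ((affSpace s₀ s ∩ syndromeBall H E).ncard : ℝ) / ((affSpace s₀ s).ncard : ℝ) →
      ∃ x : Fin (m + 1) → Fin n → F,
        H.mulVec (x 0) = s₀ ∧ (∀ i : Fin m, H.mulVec (x i.succ) = s i) ∧
        ({i : Fin n | ∃ j, x j i ≠ 0}).ncard ≤ E := by
  intro m hm s₀ s hs hdens
  exact aux_main E H τ hτ0 hline hlist m (le_trans one_le_two hm) s₀ s hs hdens
end

section
/- Let q be a prime power and let E, K, n be integers with 1 ≤ K ≤ E + 1 < n and K < q. Fix pairwise distinct elements α₁,…,α_K ∈ 𝔽_q. Then there exist vectors x₁, x₂ ∈ 𝔽_q^n such that wt(x₁ + α_j x₂) = E for every j ∈ [K], and wt(x₁ + α x₂) = E + 1 for every α ∈ 𝔽_q \ {α₁,…,α_K}. Moreover, for every matrix H ∈ 𝔽_q^{r×n} such that the code C = ker(H) has minimum distance d(C) ≥ 2E + 2, the affine syndrome line L := {Hx₁ + α·Hx₂ : α ∈ 𝔽_q} ⊆ 𝔽_q^r satisfies |L ∩ H_E| ≥ K and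 L ⊄ H_E. -/
/-- No-slack obstruction: there are `x₁, x₂` whose line takes weight exactly `E` at the
chosen `K` points and weight `E+1` elsewhere; for any parity-check matrix whose kernel
has minimum distance at least `2E+2`, the induced syndrome line has at least `K` points
in `H_E` but is not contained in `H_E`. -/
theorem stmt_5 {F : Type} [Field F] [Fintype F] [DecidableEq F]
    (n E K : ℕ) (hK1 : 1 ≤ K) (hKE : K ≤ E + 1) (hEn : E + 1 < n)
    (hKq : K < Fintype.card F) (α : Fin K → F) (hα : Function.Injective α) :
    ∃ x₁ x₂ : Fin n → F,
      (∀ j : Fin K, hammingNorm (x₁ + α j • x₂) = E) ∧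
      (∀ a : F, (∀ j : Fin K, a ≠ α j) → hammingNorm (x₁ + a • x₂) = E + 1) ∧
      (∀ (r : ℕ) (H : Matrix (Fin r) (Fin n) F),
        (∀ c : Fin n → F, H.mulVec c = 0 → c ≠ 0 → 2 * E + 2 ≤ hammingNorm c) →
        K ≤ ({t : Fin r → F | ∃ a : F, t = H.mulVec x₁ + a • H.mulVec x₂} ∩
              syndromeBall H E).ncard ∧
        ¬ {t : Fin r → F | ∃ a : F, t = H.mulVec x₁ + a • H.mulVec x₂} ⊆
              syndromeBall H E) := by
  have hEn' : E + 1 ≤ n := le_of_lt hEn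
  have hKn : K < n := lt_of_le_of_lt hKE hEn
  set x₁ : Fin n → F := fun i =>
    if h : (i : ℕ) < K then -α ⟨i, h⟩ else if (i : ℕ) ≤ E then 1 else 0 with hx₁
  set x₂ : Fin n → F := fun i => if (i : ℕ) < K then 1 else 0 with hx₂
  have hentry : ∀ (a : F) (i : Fin n),
      (x₁ + a • x₂) i = if h : (i : ℕ) < K then a - α ⟨i, h⟩
        else if (i : ℕ) ≤ E then 1 else 0 := by
    intro a i
    simp only [Pi.add_apply, Pi.smul_apply, smul_eq_mul, hx₁, hx₂]
    by_cases h : (i : ℕ) < K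
    · simp only [h, if_pos, dif_pos]; ring
    · simp [h]
  have key : ∀ a : F, hammingNorm (x₁ + a • x₂) = if ∃ j, a = α j then E else E + 1 := by
    intro a
    by_cases hcase : ∃ j, a = α j
    · obtain ⟨j, rfl⟩ := hcase
      rw [if_pos ⟨j, rfl⟩]
      have hjn : (j : ℕ) < n := lt_of_lt_of_le (lt_of_lt_of_le j.2 hKE) hEn'
      have hsupp : ({i | (x₁ + α j • x₂) i ≠ 0} : Finset (Fin n))
          = (Finset.Iio (⟨E + 1, hEn⟩ : Fin n)).erase ⟨j, hjn⟩ := by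
        ext i
        simp only [Finset.mem_filter, Finset.mem_univ, true_and, Finset.mem_erase,
          Finset.mem_Iio, Set.mem_setOf_eq, hentry, Fin.lt_def, ne_eq, Fin.ext_iff]
        by_cases h : (i : ℕ) < K
        · simp only [dif_pos h, sub_ne_zero]
          constructor
          · intro hne
            refine ⟨fun heq => hne (congrArg α (Fin.ext heq.symm)), lt_of_lt_of_le h hKE⟩
          · rintro ⟨hne, -⟩ heq
            exact hne (congrArg Fin.val (hα heq)).symm
        · simp only [dif_neg h]
          have hij : (i : ℕ) ≠ (j : ℕ) := fun heq =>
            h (heq ▸ j.2)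
          constructor
          · intro hne
            refine ⟨hij, ?_⟩
            by_contra hle
            simp only [Nat.lt_succ_iff] at hle
            simp [if_neg hle] at hne
          · intro ⟨_, hlt⟩
            rw [if_pos (Nat.lt_succ_iff.mp hlt)]
            exact one_ne_zero
      have hmem : (⟨j, hjn⟩ : Fin n) ∈ Finset.Iio (⟨E + 1, hEn⟩ : Fin n) :=
        Finset.mem_Iio.mpr (Fin.mk_lt_mk.mpr (lt_of_lt_of_le j.2 hKE))
      rw [hammingNorm, hsupp, Finset.card_erase_of_mem hmem]
      simp [Fin.card_Iio]
    · rw [if_neg hcase]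
      have hsupp : ({i | (x₁ + a • x₂) i ≠ 0} : Finset (Fin n))
          = Finset.Iio (⟨E + 1, hEn⟩ : Fin n) := by
        ext i
        simp only [Finset.mem_filter, Finset.mem_univ, true_and, Finset.mem_Iio,
          Set.mem_setOf_eq, hentry, Fin.lt_def]
        by_cases h : (i : ℕ) < K
        · simp only [dif_pos h, sub_ne_zero]
          constructor
          · intro _; exact lt_of_lt_of_le h hKE
          · intro _ heq; exact hcase ⟨⟨i, h⟩, heq⟩
        · simp only [dif_neg h]
          constructor
          · intro hne
            by_contra hle
            simp only [Nat.lt_succ_iff] at hle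
            simp [if_neg hle] at hne
          · intro hlt
            rw [if_pos (Nat.lt_succ_iff.mp hlt)]
            exact one_ne_zero
      rw [hammingNorm, hsupp, Fin.card_Iio]
  refine ⟨x₁, x₂, fun j => by rw [key, if_pos ⟨j, rfl⟩],
    fun a ha => by rw [key, if_neg (fun ⟨j, hj⟩ => ha j hj)], ?_⟩
  intro r H hd
  have hlin : ∀ a : F, H.mulVec (x₁ + a • x₂) = H.mulVec x₁ + a • H.mulVec x₂ := by
    intro a
    rw [Matrix.mulVec_add, Matrix.mulVec_smul]
  have hx₂ne : x₂ ≠ 0 := by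
    intro h0
    have : x₂ ⟨0, lt_of_le_of_lt (Nat.zero_le _) hKn⟩ = 1 := by
      simp only [hx₂]
      rw [if_pos (show 0 < K from hK1)]
    rw [h0] at this
    simp at this
  have hwtx₂ : hammingNorm x₂ ≤ K := by
    have hsub : ({i | x₂ i ≠ 0} : Finset (Fin n)) ⊆ Finset.Iio (⟨K, hKn⟩ : Fin n) := by
      intro i hi
      simp only [Finset.mem_filter, Set.mem_setOf_eq, Finset.mem_univ, true_and, hx₂] at hi
      simp only [Finset.mem_Iio, Fin.lt_def]
      by_contra h
      exact hi (if_neg (fun hlt => h hlt)) 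
    calc hammingNorm x₂ ≤ (Finset.Iio (⟨K, hKn⟩ : Fin n)).card := Finset.card_le_card hsub
      _ = K := by simp [Fin.card_Iio]
  have hHx₂ : H.mulVec x₂ ≠ 0 := by
    intro h0
    have := hd x₂ h0 hx₂ne
    omega
  set f : Fin K → (Fin r → F) := fun j => H.mulVec x₁ + α j • H.mulVec x₂ with hf
  have hfinj : Function.Injective f := by
    intro j k hjk
    simp only [hf] at hjk
    have h1 : α j • H.mulVec x₂ = α k • H.mulVec x₂ := add_left_cancel hjk
    have h2 : (α j - α k) • H.mulVec x₂ = 0 := by rw [sub_smul, h1, sub_self]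
    rcases smul_eq_zero.mp h2 with h | h
    · exact hα (sub_eq_zero.mp h)
    · exact absurd h hHx₂
  constructor
  · have hsub : Set.range f ⊆
        ({t : Fin r → F | ∃ a : F, t = H.mulVec x₁ + a • H.mulVec x₂} ∩ syndromeBall H E) := by
      rintro t ⟨j, rfl⟩
      refine ⟨⟨α j, rfl⟩, x₁ + α j • x₂, ?_, hlin (α j)⟩
      rw [key, if_pos ⟨j, rfl⟩]
    have hfin : ({t : Fin r → F | ∃ a : F, t = H.mulVec x₁ + a • H.mulVec x₂} ∩
        syndromeBall H E).Finite := by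
      apply Set.Finite.inter_of_left
      have : {t : Fin r → F | ∃ a : F, t = H.mulVec x₁ + a • H.mulVec x₂}
          = Set.range (fun a : F => H.mulVec x₁ + a • H.mulVec x₂) := by
        ext t; simp [eq_comm]
      rw [this]
      exact Set.finite_range _
    calc K = Nat.card (Fin K) := (Nat.card_eq_fintype_card.trans (Fintype.card_fin K)).symm
      _ = (Set.univ : Set (Fin K)).ncard := (Set.ncard_univ _).symm
      _ = (f '' Set.univ).ncard := (Set.ncard_image_of_injective _ hfinj).symm
      _ = (Set.range f).ncard := by rw [Set.image_univ]
      _ ≤ _ := Set.ncard_le_ncard hsub hfin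
  · intro hsub
    obtain ⟨a, ha⟩ : ∃ a : F, ∀ j, a ≠ α j := by
      by_contra h
      push_neg at h
      have hcover : (Finset.univ : Finset F) ⊆ Finset.univ.image α := by
        intro a _
        obtain ⟨j, hj⟩ := h a
        exact Finset.mem_image.mpr ⟨j, Finset.mem_univ _, hj.symm⟩
      have := Finset.card_le_card hcover
      rw [Finset.card_image_of_injective _ hα, Finset.card_univ, Finset.card_univ,
        Fintype.card_fin] at this
      omega
    obtain ⟨y, hy, hHy⟩ := hsub ⟨a, rfl⟩
    set c := (x₁ + a • x₂) - y with hc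
    have hHc : H.mulVec c = 0 := by
      rw [hc, Matrix.mulVec_sub, hlin, hHy, sub_self]
    have hwt : hammingNorm (x₁ + a • x₂) = E + 1 := by
      rw [key, if_neg (fun ⟨j, hj⟩ => ha j hj)]
    have hcne : c ≠ 0 := by
      intro h0
      have heq : x₁ + a • x₂ = y := sub_eq_zero.mp h0
      rw [← heq, hwt] at hy
      omega
    have h1 := hd c hHc hcne
    have h2 : hammingNorm c ≤ hammingNorm (x₁ + a • x₂) + hammingNorm y := by
      rw [hc, show hammingNorm (x₁ + a • x₂ - y) = hammingDist (x₁ + a • x₂) y by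
        simp only [hammingDist, hammingNorm, Pi.sub_apply, ne_eq, sub_eq_zero]]
      calc hammingDist (x₁ + a • x₂) y ≤
          hammingDist (x₁ + a • x₂) 0 + hammingDist 0 y := hammingDist_triangle _ _ _
        _ = hammingNorm (x₁ + a • x₂) + hammingNorm y := by
          rw [hammingDist_zero_right, hammingDist_comm, hammingDist_zero_right]
    omega
end

section
/- Let q be a prime power, H ∈ 𝔽_q^{r×n}, and let C = ker(H) be a linear code with minimum distance d(C) ≥ d, where 0 < E < d, and set γ := (d − E)/d ∈ (0,1). Let s₀, s₁ ∈ 𝔽_q^r with dim_{𝔽_q} span{s₀,s₁} = 2 and L = {s₀ + α s₁ : α ∈ 𝔽_q}. Suppose X = [x₁|⋯|x_K] ∈ 𝔽_q^{n×K} is an E-witness matrix covering K elements of L, i.e., there exist pairwise distinct α₁,…,α_K ∈ 𝔽_q with Hx_j = s₀ + α_j s₁ and wt(x_j) ≤ E for all j ∈ [K], and suppose rank(X) = t ≥ 3. Then there exists a subset J ⊆ [K] with |J| ≥ Kγ such that the submatrix X_J = [x_j]_{j∈J} is still an E-witness matrix covering |J| elements of L (with the corresponding α_j, j ∈ J) and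 rank(X_J) ≤ t − 1. -/
/-- Rank-reduction step for witness matrices of a nondegenerate syndrome line:
from a rank-`t ≥ 3` `E`-witness matrix covering `K` points, one keeps a `γ`-fraction of the
columns and drops the rank by one. -/
theorem stmt_6 {F : Type} [Field F] [Fintype F] [DecidableEq F] {r n : ℕ}
    (H : Matrix (Fin r) (Fin n) F) (d E : ℕ) (hE0 : 0 < E) (hEd : E < d)
    (hdist : ∀ c : Fin n → F, H.mulVec c = 0 → c ≠ 0 → d ≤ hammingNorm c)
    (γ : ℝ) (hγ : γ = ((d : ℝ) - E) / d)
    (s₀ s₁ : Fin r → F)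
    (hdim : Module.finrank F (Submodule.span F ({s₀, s₁} : Set (Fin r → F))) = 2)
    (K : ℕ) (α : Fin K → F) (hα : Function.Injective α)
    (x : Fin K → Fin n → F)
    (hwit : ∀ j : Fin K, H.mulVec (x j) = s₀ + α j • s₁ ∧ hammingNorm (x j) ≤ E)
    (t : ℕ) (ht : 3 ≤ t)
    (hrank : (Matrix.of fun (i : Fin n) (j : Fin K) => x j i).rank = t) :
    ∃ J : Finset (Fin K),
      (K : ℝ) * γ ≤ (J.card : ℝ) ∧
      (Matrix.of fun (i : Fin n) (j : J) => x j i).rank ≤ t - 1 := by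
  classical
  have hd0 : 0 < d := lt_trans hE0 hEd
  set M : Matrix (Fin n) (Fin K) F := Matrix.of fun i j => x j i with hM
  have hKt : t ≤ K := by
    have h1 := Matrix.rank_le_card_width M
    rw [hrank] at h1
    simpa using h1
  have hK3 : 3 ≤ K := le_trans ht hKt
  set V : Submodule F (Fin n → F) := Submodule.span F (Set.range x) with hV
  have hVrank : Module.finrank F V = t := by
    have h1 := Matrix.rank_eq_finrank_span_cols M
    rw [hrank] at h1
    exact h1.symm
  set a : Fin K := ⟨0, by omega⟩ with ha
  set b : Fin K := ⟨1, by omega⟩ with hb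
  have hab : a ≠ b := by simp [ha, hb, Fin.ext_iff]
  have hαab : α b - α a ≠ 0 := sub_ne_zero.mpr fun h => hab (hα h).symm
  -- find a column outside the span of columns a and b
  have hj : ∃ j, x j ∉ Submodule.span F ({x a, x b} : Set (Fin n → F)) := by
    by_contra h
    push_neg at h
    have hle : V ≤ Submodule.span F ({x a, x b} : Set (Fin n → F)) := by
      rw [hV, Submodule.span_le]
      rintro v ⟨j, rfl⟩; exact h j
    have h2 : Module.finrank F (Submodule.span F ({x a, x b} : Set (Fin n → F))) ≤ 2 := by
      refine le_trans (finrank_span_le_card _) ?_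
      rw [Set.toFinset_insert, Set.toFinset_singleton]
      exact le_trans (Finset.card_insert_le _ _) (by simp)
    have := le_trans (hVrank ▸ Submodule.finrank_mono hle) h2
    omega
  obtain ⟨j₀, hj₀⟩ := hj
  set c : F := (α b - α j₀) / (α b - α a) with hc
  have hcj : α j₀ = c * α a + (1 - c) * α b := by
    field_simp [hc]
    have h' : c * (α b - α a) = α b - α j₀ := by rw [hc]; exact div_mul_cancel₀ _ hαab
    linear_combination h'
  set w : Fin n → F := x j₀ - (c • x a + (1 - c) • x b) with hw
  have hker : H.mulVec w = 0 := by
    rw [hw]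
    have h1 := (hwit j₀).1
    have h2 := (hwit a).1
    have h3 := (hwit b).1
    rw [Matrix.mulVec_sub, Matrix.mulVec_add, Matrix.mulVec_smul, Matrix.mulVec_smul,
      h1, h2, h3, hcj]
    module
  have hw0 : w ≠ 0 := by
    intro h
    apply hj₀
    have hx : x j₀ = c • x a + (1 - c) • x b := by
      have := sub_eq_zero.mp (hw ▸ h)
      exact this
    rw [hx]
    exact Submodule.mem_span_pair.mpr ⟨c, 1 - c, rfl⟩
  have hwV : w ∈ V := by
    have hxa : x a ∈ V := Submodule.subset_span ⟨a, rfl⟩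
    have hxb : x b ∈ V := Submodule.subset_span ⟨b, rfl⟩
    have hxj : x j₀ ∈ V := Submodule.subset_span ⟨j₀, rfl⟩
    exact Submodule.sub_mem _ hxj (Submodule.add_mem _ (Submodule.smul_mem _ _ hxa)
      (Submodule.smul_mem _ _ hxb))
  have hwd : d ≤ hammingNorm w := hdist w hker hw0
  -- counting
  set N : Fin n → ℕ := fun i => (Finset.univ.filter fun j => x j i ≠ 0).card with hN
  have hsumE : ∑ i, N i ≤ K * E := by
    have hswap : ∑ i, N i = ∑ j, hammingNorm (x j) := by
      simp only [hN, hammingNorm, Finset.card_filter]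
      exact Finset.sum_comm
    rw [hswap]
    calc ∑ j, hammingNorm (x j) ≤ ∑ _j : Fin K, E :=
          Finset.sum_le_sum fun j _ => (hwit j).2
      _ = K * E := by simp [Finset.sum_const, Finset.card_univ, mul_comm]
  set S : Finset (Fin n) := Finset.univ.filter fun i => w i ≠ 0 with hS
  have hScard : d ≤ S.card := by
    simpa [hammingNorm, hS, Finset.filter_mem_eq_inter] using hwd
  have hi : ∃ i ∈ S, d * N i ≤ K * E := by
    by_contra h
    push_neg at h
    have h1 : S.card * (K * E + 1) ≤ ∑ i ∈ S, d * N i := by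
      calc S.card * (K * E + 1) = ∑ _i ∈ S, (K * E + 1) := by
            simp [Finset.sum_const, mul_comm]
        _ ≤ ∑ i ∈ S, d * N i := Finset.sum_le_sum fun i hiS => h i hiS
    have h2 : ∑ i ∈ S, d * N i = d * ∑ i ∈ S, N i := by
      rw [Finset.mul_sum]
    have h3 : ∑ i ∈ S, N i ≤ ∑ i, N i :=
      Finset.sum_le_sum_of_subset (Finset.subset_univ S)
    have h4 : d * (K * E + 1) ≤ d * (K * E) := by
      calc d * (K * E + 1) ≤ S.card * (K * E + 1) :=
            Nat.mul_le_mul_right _ hScard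
        _ ≤ d * ∑ i ∈ S, N i := by rw [← h2]; exact h1
        _ ≤ d * (K * E) := Nat.mul_le_mul_left _ (le_trans h3 hsumE)
    have := Nat.le_of_mul_le_mul_left h4 hd0
    omega
  obtain ⟨i₀, hi₀S, hi₀⟩ := hi
  have hwi₀ : w i₀ ≠ 0 := by
    have := Finset.mem_filter.mp hi₀S
    exact this.2
  refine ⟨Finset.univ.filter fun j => x j i₀ = 0, ?_, ?_⟩
  · -- cardinality bound
    have hcards : (Finset.univ.filter fun j => x j i₀ = 0).card + N i₀ = K := by
      have := Finset.card_filter_add_card_filter_not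
        (s := (Finset.univ : Finset (Fin K))) (p := fun j => x j i₀ = 0)
      simpa [hN] using this
    have hcast : ((Finset.univ.filter fun j => x j i₀ = 0).card : ℝ) + (N i₀ : ℝ) = K := by
      exact_mod_cast congrArg (Nat.cast (R := ℝ)) hcards
    have hNr : (d : ℝ) * N i₀ ≤ K * E := by exact_mod_cast hi₀
    have hdR : (0 : ℝ) < d := by exact_mod_cast hd0
    rw [hγ, ← mul_div_assoc, div_le_iff₀ hdR]
    nlinarith [hcast, hNr]
  · -- rank bound
    set J : Finset (Fin K) := Finset.univ.filter fun j => x j i₀ = 0 with hJ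
    set W : Submodule F (Fin n → F) := V ⊓ LinearMap.ker (LinearMap.proj (R := F)
      (φ := fun _ : Fin n => F) i₀) with hWdef
    have hWlt : W < V := by
      refine lt_of_le_of_ne inf_le_left fun hEq => ?_
      have hwW : w ∈ W := hEq ▸ hwV
      have : w i₀ = 0 := hwW.2
      exact hwi₀ this
    have hWr : Module.finrank F W < t := by
      rw [← hVrank]
      exact Submodule.finrank_lt_finrank_of_lt hWlt
    have hspan : Submodule.span F (Set.range fun (j : J) => x (j : Fin K)) ≤ W := by
      rw [Submodule.span_le]
      rintro v ⟨j, rfl⟩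
      refine ⟨Submodule.subset_span ⟨(j : Fin K), rfl⟩, ?_⟩
      have hj0 : x (j : Fin K) i₀ = 0 := (Finset.mem_filter.mp j.2).2
      simpa [LinearMap.mem_ker] using hj0
    have hrk : (Matrix.of fun (i : Fin n) (j : J) => x (j : Fin K) i).rank =
        Module.finrank F (Submodule.span F (Set.range fun (j : J) => x (j : Fin K))) := by
      rw [Matrix.rank_eq_finrank_span_cols]
      rfl
    rw [hrk]
    have := le_trans (Submodule.finrank_mono hspan) (Nat.le_of_lt_succ (by omega : Module.finrank F W < (t - 1) + 1))
    exact this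
end

section
/- Let q be a prime power, H ∈ 𝔽_q^{r×n}, and let C = ker(H) be a linear code with minimum distance d(C) ≥ d, where 0 < E < d, and set γ := (d − E)/d. Let s₀, s₁ ∈ 𝔽_q^r with dim_{𝔽_q} span{s₀,s₁} = 2. Suppose X = [x₁|⋯|x_K] ∈ 𝔽_q^{n×K} satisfies Hx_j = s₀ + α_j s₁ and wt(x_j) ≤ E for pairwise distinct α₁,…,α_K ∈ 𝔽_q, and rank(X) = t ≥ 2. Then there exists a subset J ⊆ [K] with |J| ≥ K·γ^{t−2} and vectors ã, b̃ ∈ 𝔽_q^n with b̃ ≠ 0 such that x_j = ã + α_j b̃ for all j ∈ J, Hã = s₀, and Hb̃ = s₁. -/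
set_option linter.unusedSectionVars false

open Submodule Set

section Extraction

variable {F : Type} [Field F] [Fintype F] [DecidableEq F] {r n : ℕ}

private lemma span_singleton_finrank_le {m : ℕ} (a : Fin m → F) :
    Module.finrank F (span F ({a} : Set (Fin m → F))) ≤ 1 := by
  rcases eq_or_ne a 0 with rfl | ha
  · rw [Submodule.span_zero_singleton]
    simp [finrank_bot]
  · rw [finrank_span_singleton ha]

private lemma span_pair_finrank_le {m : ℕ} (a b : Fin m → F) :
    Module.finrank F (span F ({a, b} : Set (Fin m → F))) ≤ 2 := by
  rw [show ({a, b} : Set (Fin m → F)) = insert a {b} from rfl, Submodule.span_insert]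
  calc Module.finrank F ↥(span F {a} ⊔ span F ({b} : Set (Fin m → F)))
      ≤ Module.finrank F (span F ({a} : Set (Fin m → F)))
        + Module.finrank F (span F ({b} : Set (Fin m → F))) :=
        Submodule.finrank_add_le_finrank_add_finrank _ _
    _ ≤ 1 + 1 := add_le_add (span_singleton_finrank_le a) (span_singleton_finrank_le b)
    _ = 2 := rfl

private lemma line_helper (H : Matrix (Fin r) (Fin n) F) (s₀ s₁ : Fin r → F)
    (u v : Fin n → F) (βu βv : F) (hne : βu ≠ βv)
    (hu : H.mulVec u = s₀ + βu • s₁) (hv : H.mulVec v = s₀ + βv • s₁) :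
    H.mulVec ((βv - βu)⁻¹ • (v - u)) = s₁ ∧
    H.mulVec (u - βu • ((βv - βu)⁻¹ • (v - u))) = s₀ := by
  have hb : H.mulVec ((βv - βu)⁻¹ • (v - u)) = s₁ := by
    rw [Matrix.mulVec_smul, Matrix.mulVec_sub, hu, hv]
    have h : (s₀ + βv • s₁) - (s₀ + βu • s₁) = (βv - βu) • s₁ := by module
    rw [h, smul_smul, inv_mul_cancel₀ (sub_ne_zero.mpr (Ne.symm hne)), one_smul]
  refine ⟨hb, ?_⟩
  rw [Matrix.mulVec_sub, Matrix.mulVec_smul, hb, hu]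
  module

private lemma all_on_line (H : Matrix (Fin r) (Fin n) F) (s₀ s₁ : Fin r → F)
    (hind : ∀ c₀ c₁ : F, c₀ • s₀ + c₁ • s₁ = 0 → c₀ = 0 ∧ c₁ = 0)
    {K : ℕ} (α : Fin K → F) (hα : Function.Injective α) (x : Fin K → Fin n → F)
    (hwit : ∀ j : Fin K, H.mulVec (x j) = s₀ + α j • s₁)
    (S : Finset (Fin K)) (hrk : Module.finrank F (span F (x '' ↑S)) ≤ 2)
    (j k : Fin K) (hjS : j ∈ S) (hkS : k ∈ S) (hjk : j ≠ k) :
    ∀ l ∈ S, x l = (x j - α j • ((α k - α j)⁻¹ • (x k - x j)))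
      + α l • ((α k - α j)⁻¹ • (x k - x j)) := by
  have hαjk : α j ≠ α k := hα.ne hjk
  have hne : α k - α j ≠ 0 := sub_ne_zero.mpr (Ne.symm hαjk)
  have hli : LinearIndependent F ![x j, x k] := by
    rw [LinearIndependent.pair_iff]
    intro c₀ c₁ hc
    have h0 : H.mulVec (c₀ • x j + c₁ • x k) = 0 := by rw [hc, Matrix.mulVec_zero]
    rw [Matrix.mulVec_add, Matrix.mulVec_smul, Matrix.mulVec_smul, hwit j, hwit k] at h0
    have h1 : (c₀ + c₁) • s₀ + (c₀ * α j + c₁ * α k) • s₁ = 0 := by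
      rw [← h0]; module
    obtain ⟨e1, e2⟩ := hind _ _ h1
    constructor
    · have : c₀ * (α j - α k) = 0 := by linear_combination e2 - α k * e1
      rcases mul_eq_zero.mp this with h | h
      · exact h
      · exact absurd (sub_eq_zero.mp h) hαjk
    · have : c₁ * (α k - α j) = 0 := by linear_combination e2 - α j * e1
      exact (mul_eq_zero.mp this).resolve_right hne
  have hpairrank : Module.finrank F (span F ({x j, x k} : Set (Fin n → F))) = 2 := by
    have h2 := finrank_span_eq_card hli
    have : Set.range ![x j, x k] = ({x j, x k} : Set (Fin n → F)) := by
      simp [Matrix.range_cons, Matrix.range_empty]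
      exact Set.pair_comm (x k) (x j)
    rw [this] at h2
    simpa [Set.pair_comm] using h2
  have hle : span F ({x j, x k} : Set (Fin n → F)) ≤ span F (x '' ↑S) := by
    apply span_le.mpr
    rintro v (rfl | rfl)
    · exact subset_span ⟨j, hjS, rfl⟩
    · exact subset_span ⟨k, hkS, rfl⟩
  have heq : span F ({x j, x k} : Set (Fin n → F)) = span F (x '' ↑S) :=
    Submodule.eq_of_le_of_finrank_le hle (by omega)
  intro l hlS
  have hmem : x l ∈ span F ({x j, x k} : Set (Fin n → F)) := by
    rw [heq]; exact subset_span ⟨l, hlS, rfl⟩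
  obtain ⟨c₀, c₁, hc⟩ := Submodule.mem_span_pair.mp hmem
  have h0 : H.mulVec (c₀ • x j + c₁ • x k) = s₀ + α l • s₁ := by rw [hc, hwit l]
  rw [Matrix.mulVec_add, Matrix.mulVec_smul, Matrix.mulVec_smul, hwit j, hwit k] at h0
  have h1 : (c₀ + c₁ - 1) • s₀ + (c₀ * α j + c₁ * α k - α l) • s₁ = 0 := by
    linear_combination (norm := module) h0
  obtain ⟨e1, e2⟩ := hind _ _ h1
  have hc1 : c₁ * (α k - α j) = α l - α j := by linear_combination e2 - α j * e1
  have hc0 : c₀ * (α k - α j) = α k - α l := by linear_combination α k * e1 - e2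
  have hc1' : c₁ = (α l - α j) * (α k - α j)⁻¹ := by
    field_simp
    linear_combination hc1
  have hc0' : c₀ = (α k - α l) * (α k - α j)⁻¹ := by
    field_simp
    linear_combination hc0
  rw [← hc, hc0', hc1']
  match_scalars
  · field_simp
    ring
  · field_simp
    ring

private lemma extraction_aux (H : Matrix (Fin r) (Fin n) F) (d E : ℕ) (hEd : E < d)
    (hdist : ∀ c : Fin n → F, H.mulVec c = 0 → c ≠ 0 → d ≤ hammingNorm c)
    (γ : ℝ) (hγ : γ = ((d : ℝ) - E) / d)
    (s₀ s₁ : Fin r → F)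
    (hind : ∀ c₀ c₁ : F, c₀ • s₀ + c₁ • s₁ = 0 → c₀ = 0 ∧ c₁ = 0)
    {K : ℕ} (α : Fin K → F) (hα : Function.Injective α)
    (x : Fin K → Fin n → F)
    (hwit : ∀ j : Fin K, H.mulVec (x j) = s₀ + α j • s₁ ∧ hammingNorm (x j) ≤ E)
    (j₁ j₂ : Fin K) (hj12 : j₁ ≠ j₂) :
    ∀ (m : ℕ) (S : Finset (Fin K)),
      Module.finrank F (span F (x '' ↑S)) ≤ m + 2 →
      ∃ J : Finset (Fin K), J ⊆ S ∧ (S.card : ℝ) * γ ^ m ≤ (J.card : ℝ) ∧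
        ∃ a b : Fin n → F, b ≠ 0 ∧ (∀ j ∈ J, x j = a + α j • b) ∧
          H.mulVec a = s₀ ∧ H.mulVec b = s₁ := by
  have hd0 : 0 < d := lt_of_le_of_lt (Nat.zero_le E) hEd
  have hdR : (0:ℝ) < d := by exact_mod_cast hd0
  have hEdR : (E:ℝ) < d := by exact_mod_cast hEd
  have hγ0 : 0 ≤ γ := by
    rw [hγ]; apply div_nonneg _ hdR.le; linarith
  have hγ1 : γ ≤ 1 := by
    rw [hγ, div_le_one hdR]
    have : (0:ℝ) ≤ E := Nat.cast_nonneg E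
    linarith
  have hs₁ : s₁ ≠ 0 := by
    intro h
    have := (hind 0 1 (by simp [h])).2
    simp at this
  intro m
  induction m with
  | zero =>
    intro S hrk
    refine ⟨S, Finset.Subset.refl S, by simp, ?_⟩
    by_cases hpair : ∃ j ∈ S, ∃ k ∈ S, j ≠ k
    · obtain ⟨j, hjS, k, hkS, hjk⟩ := hpair
      obtain ⟨hb, ha⟩ := line_helper H s₀ s₁ (x j) (x k) (α j) (α k) (hα.ne hjk)
        (hwit j).1 (hwit k).1
      refine ⟨x j - α j • ((α k - α j)⁻¹ • (x k - x j)),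
        (α k - α j)⁻¹ • (x k - x j), ?_, ?_, ha, hb⟩
      · intro h; rw [h, Matrix.mulVec_zero] at hb; exact hs₁ hb.symm
      · exact all_on_line H s₀ s₁ hind α hα x (fun j => (hwit j).1) S hrk j k hjS hkS hjk
    · push_neg at hpair
      obtain ⟨hb, ha⟩ := line_helper H s₀ s₁ (x j₁) (x j₂) (α j₁) (α j₂) (hα.ne hj12)
        (hwit j₁).1 (hwit j₂).1
      have hbne : (α j₂ - α j₁)⁻¹ • (x j₂ - x j₁) ≠ 0 := by
        intro h; rw [h, Matrix.mulVec_zero] at hb; exact hs₁ hb.symm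
      rcases S.eq_empty_or_nonempty with rfl | ⟨l₀, hl₀⟩
      · exact ⟨_, _, hbne, by simp, ha, hb⟩
      · refine ⟨x l₀ - α l₀ • ((α j₂ - α j₁)⁻¹ • (x j₂ - x j₁)),
          (α j₂ - α j₁)⁻¹ • (x j₂ - x j₁), hbne, ?_, ?_, hb⟩
        · intro l hl
          have hll : l = l₀ := hpair l hl l₀ hl₀
          subst hll
          module
        · rw [Matrix.mulVec_sub, Matrix.mulVec_smul, hb, (hwit l₀).1]
          module
  | succ m ih =>
    intro S hrk
    by_cases hle2 : Module.finrank F (span F (x '' ↑S)) ≤ m + 2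
    · obtain ⟨J, hJS, hcard, rest⟩ := ih S hle2
      refine ⟨J, hJS, ?_, rest⟩
      calc (S.card:ℝ) * γ^(m+1) ≤ (S.card:ℝ) * γ^m := by
            apply mul_le_mul_of_nonneg_left _ (Nat.cast_nonneg _)
            exact pow_le_pow_of_le_one hγ0 hγ1 (Nat.le_succ m)
        _ ≤ (J.card:ℝ) := hcard
    · have hrk3 : Module.finrank F (span F (x '' ↑S)) = m + 3 := by omega
      have hpair : ∃ j ∈ S, ∃ k ∈ S, j ≠ k := by
        by_contra hno; push_neg at hno
        have hsmall : Module.finrank F (span F (x '' ↑S)) ≤ 1 := by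
          rcases S.eq_empty_or_nonempty with rfl | ⟨l₀, hl₀⟩
          · rw [Finset.coe_empty, Set.image_empty, Submodule.span_empty]
            simp [finrank_bot]
          · have hsub : x '' ↑S ⊆ {x l₀} := by
              rintro v ⟨l, hl, rfl⟩
              rw [hno l hl l₀ hl₀]
              rfl
            calc Module.finrank F (span F (x '' ↑S))
                ≤ Module.finrank F (span F ({x l₀} : Set (Fin n → F))) :=
                  Submodule.finrank_mono (span_mono hsub)
              _ ≤ 1 := span_singleton_finrank_le _
        omega
      obtain ⟨ja, hjaS, jb, hjbS, hjab⟩ := hpair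
      obtain ⟨hb, ha⟩ := line_helper H s₀ s₁ (x ja) (x jb) (α ja) (α jb) (hα.ne hjab)
        (hwit ja).1 (hwit jb).1
      set b : Fin n → F := (α jb - α ja)⁻¹ • (x jb - x ja) with hbdef
      set a : Fin n → F := x ja - α ja • b with hadef
      by_cases hall : ∀ l ∈ S, x l = a + α l • b
      · exfalso
        have hle : span F (x '' ↑S) ≤ span F ({a, b} : Set (Fin n → F)) := by
          apply span_le.mpr
          rintro v ⟨l, hl, rfl⟩
          rw [hall l hl]
          exact add_mem (subset_span (Set.mem_insert _ _))
            (smul_mem _ _ (subset_span (Set.mem_insert_of_mem _ rfl)))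
        have h1 := Submodule.finrank_mono hle
        have h2 := span_pair_finrank_le (F := F) a b
        omega
      · push_neg at hall
        obtain ⟨j₃, hj₃S, hzne'⟩ := hall
        set z : Fin n → F := x j₃ - (a + α j₃ • b) with hzdef
        have hzne : z ≠ 0 := sub_ne_zero.mpr hzne'
        have hzcode : H.mulVec z = 0 := by
          rw [hzdef, Matrix.mulVec_sub, Matrix.mulVec_add, Matrix.mulVec_smul, ha, hb,
            (hwit j₃).1]
          module
        have hwtz : d ≤ hammingNorm z := hdist z hzcode hzne
        set D : Finset (Fin n) := Finset.univ.filter (fun i => z i ≠ 0) with hDdef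
        have hDcard : d ≤ D.card := hwtz
        have hDne : D.Nonempty := Finset.card_pos.mp (lt_of_lt_of_le hd0 hDcard)
        have hsum : ∑ i ∈ D, (S.filter (fun j => x j i ≠ 0)).card ≤ S.card * E := by
          calc ∑ i ∈ D, (S.filter (fun j => x j i ≠ 0)).card
              = ∑ i ∈ D, ∑ j ∈ S, if x j i ≠ 0 then 1 else 0 := by
                refine Finset.sum_congr rfl fun i _ => ?_
                exact Finset.card_filter _ _
            _ = ∑ j ∈ S, ∑ i ∈ D, if x j i ≠ 0 then 1 else 0 := Finset.sum_comm
            _ = ∑ j ∈ S, (D.filter (fun i => x j i ≠ 0)).card := by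
                refine Finset.sum_congr rfl fun j _ => ?_
                exact (Finset.card_filter _ _).symm
            _ ≤ ∑ j ∈ S, E := by
                refine Finset.sum_le_sum fun j _ => ?_
                calc (D.filter (fun i => x j i ≠ 0)).card
                    ≤ (Finset.univ.filter (fun i => x j i ≠ 0)).card :=
                      Finset.card_le_card
                        (Finset.filter_subset_filter _ (Finset.subset_univ D))
                  _ ≤ E := (hwit j).2
            _ = S.card * E := by rw [Finset.sum_const, smul_eq_mul]
        obtain ⟨i₀, hi₀D, hmin⟩ :=
          Finset.exists_min_image D (fun i => (S.filter (fun j => x j i ≠ 0)).card) hDne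
        have hbad : d * (S.filter (fun j => x j i₀ ≠ 0)).card ≤ S.card * E := by
          calc d * (S.filter (fun j => x j i₀ ≠ 0)).card
              ≤ D.card * (S.filter (fun j => x j i₀ ≠ 0)).card :=
                Nat.mul_le_mul_right _ hDcard
            _ ≤ ∑ i ∈ D, (S.filter (fun j => x j i ≠ 0)).card := by
                simpa using Finset.card_nsmul_le_sum D _ _ hmin
            _ ≤ S.card * E := hsum
        set S' : Finset (Fin K) := S.filter (fun j => x j i₀ = 0) with hS'def
        have hsplit : S'.card + (S.filter (fun j => ¬ (x j i₀ = 0))).card = S.card :=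
          Finset.card_filter_add_card_filter_not _
        have hdrop : Module.finrank F (span F (x '' ↑S')) ≤ m + 2 := by
          by_contra hgt
          push_neg at hgt
          have hle : span F (x '' ↑S') ≤ span F (x '' ↑S) := by
            apply span_mono
            apply Set.image_mono
            exact_mod_cast Finset.filter_subset _ S
          have heq : span F (x '' ↑S') = span F (x '' ↑S) :=
            Submodule.eq_of_le_of_finrank_le hle (by omega)
          have hzmem : z ∈ span F (x '' ↑S) := by
            have hxa : x ja ∈ span F (x '' ↑S) := subset_span ⟨ja, hjaS, rfl⟩
            have hxb : x jb ∈ span F (x '' ↑S) := subset_span ⟨jb, hjbS, rfl⟩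
            have hx3 : x j₃ ∈ span F (x '' ↑S) := subset_span ⟨j₃, hj₃S, rfl⟩
            have hbm : b ∈ span F (x '' ↑S) := by
              rw [hbdef]; exact smul_mem _ _ (sub_mem hxb hxa)
            have ham : a ∈ span F (x '' ↑S) := by
              rw [hadef]; exact sub_mem hxa (smul_mem _ _ hbm)
            rw [hzdef]; exact sub_mem hx3 (add_mem ham (smul_mem _ _ hbm))
          rw [← heq] at hzmem
          have hz0 : z i₀ = 0 := by
            have hker : span F (x '' ↑S')
                ≤ LinearMap.ker (LinearMap.proj (R := F) (φ := fun _ : Fin n => F) i₀) := by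
              apply span_le.mpr
              rintro v ⟨l, hl, rfl⟩
              have hl' : x l i₀ = 0 := (Finset.mem_filter.mp (Finset.mem_coe.mp hl)).2
              simpa [LinearMap.mem_ker] using hl'
            have := hker hzmem
            simpa [LinearMap.mem_ker] using this
          exact (Finset.mem_filter.mp hi₀D).2 hz0
        obtain ⟨J, hJS', hJcard, rest⟩ := ih S' hdrop
        refine ⟨J, hJS'.trans (Finset.filter_subset _ _), ?_, rest⟩
        have hS'c : (S.card : ℝ) * γ ≤ (S'.card : ℝ) := by
          have h1 : (d:ℝ) * ((S.filter (fun j => ¬ (x j i₀ = 0))).card : ℝ)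
              ≤ (S.card : ℝ) * E := by exact_mod_cast hbad
          have h2 : (S'.card:ℝ) + ((S.filter (fun j => ¬ (x j i₀ = 0))).card : ℝ)
              = (S.card : ℝ) := by exact_mod_cast hsplit
          rw [hγ, mul_div_assoc']
          rw [div_le_iff₀ hdR]
          nlinarith [h1, h2]
        calc (S.card:ℝ) * γ^(m+1) = ((S.card:ℝ) * γ) * γ^m := by ring
          _ ≤ (S'.card:ℝ) * γ^m :=
            mul_le_mul_of_nonneg_right hS'c (pow_nonneg hγ0 m)
          _ ≤ (J.card:ℝ) := hJcard

end Extraction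




open Submodule Set in
/-- Rank-two extraction: from a rank-`t ≥ 2` `E`-witness matrix covering `K` points of a
nondegenerate syndrome line, at least `K·γ^{t−2}` of the witness columns lie on a common
affine line `ã + α b̃` with `H ã = s₀`, `H b̃ = s₁`. -/
theorem stmt_7 {F : Type} [Field F] [Fintype F] [DecidableEq F] {r n : ℕ}
    (H : Matrix (Fin r) (Fin n) F) (d E : ℕ) (hE0 : 0 < E) (hEd : E < d)
    (hdist : ∀ c : Fin n → F, H.mulVec c = 0 → c ≠ 0 → d ≤ hammingNorm c)
    (γ : ℝ) (hγ : γ = ((d : ℝ) - E) / d)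
    (s₀ s₁ : Fin r → F)
    (hdim : Module.finrank F (Submodule.span F ({s₀, s₁} : Set (Fin r → F))) = 2)
    (K : ℕ) (α : Fin K → F) (hα : Function.Injective α)
    (x : Fin K → Fin n → F)
    (hwit : ∀ j : Fin K, H.mulVec (x j) = s₀ + α j • s₁ ∧ hammingNorm (x j) ≤ E)
    (t : ℕ) (ht : 2 ≤ t)
    (hrank : (Matrix.of fun (i : Fin n) (j : Fin K) => x j i).rank = t) :
    ∃ J : Finset (Fin K),
      (K : ℝ) * γ ^ (t - 2) ≤ (J.card : ℝ) ∧
      ∃ a b : Fin n → F, b ≠ 0 ∧ (∀ j ∈ J, x j = a + α j • b) ∧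
        H.mulVec a = s₀ ∧ H.mulVec b = s₁ := by
  -- pair independence from finrank = 2
  have hind : ∀ c₀ c₁ : F, c₀ • s₀ + c₁ • s₁ = 0 → c₀ = 0 ∧ c₁ = 0 := by
    intro c₀ c₁ hc
    constructor
    · by_contra h0
      have hs : s₀ = c₀⁻¹ • (-(c₁ • s₁)) := by
        have h1 : c₀ • s₀ = -(c₁ • s₁) := by linear_combination (norm := module) hc
        rw [← h1, smul_smul, inv_mul_cancel₀ h0, one_smul]
      have hle : Submodule.span F ({s₀, s₁} : Set (Fin r → F))
          ≤ Submodule.span F ({s₁} : Set (Fin r → F)) := by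
        apply span_le.mpr
        rintro v (rfl | rfl)
        · rw [hs]
          exact Submodule.smul_mem _ _ (Submodule.neg_mem _
            (Submodule.smul_mem _ _ (subset_span rfl)))
        · exact subset_span rfl
      have := (Submodule.finrank_mono hle).trans (span_singleton_finrank_le s₁)
      omega
    · by_contra h1
      have hs : s₁ = c₁⁻¹ • (-(c₀ • s₀)) := by
        have h2 : c₁ • s₁ = -(c₀ • s₀) := by linear_combination (norm := module) hc
        rw [← h2, smul_smul, inv_mul_cancel₀ h1, one_smul]
      have hle : Submodule.span F ({s₀, s₁} : Set (Fin r → F))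
          ≤ Submodule.span F ({s₀} : Set (Fin r → F)) := by
        apply span_le.mpr
        rintro v (rfl | rfl)
        · exact subset_span rfl
        · rw [hs]
          exact Submodule.smul_mem _ _ (Submodule.neg_mem _
            (Submodule.smul_mem _ _ (subset_span rfl)))
      have := (Submodule.finrank_mono hle).trans (span_singleton_finrank_le s₀)
      omega
  -- rank as finrank of column span
  have hr : Module.finrank F (Submodule.span F (Set.range x)) = t := by
    rw [← hrank, Matrix.rank, Matrix.range_mulVecLin]
    have : Matrix.transpose (Matrix.of fun (i : Fin n) (j : Fin K) => x j i) = x := rfl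
    rfl
  have hK2 : 2 ≤ K := by
    have := Matrix.rank_le_card_width (Matrix.of fun (i : Fin n) (j : Fin K) => x j i)
    simp only [Fintype.card_fin] at this
    omega
  have hj12 : (⟨0, by omega⟩ : Fin K) ≠ ⟨1, by omega⟩ := by
    intro h
    simpa using congrArg Fin.val h
  obtain ⟨J, _, hcard, rest⟩ := extraction_aux H d E hEd hdist γ hγ s₀ s₁ hind α hα x hwit
    ⟨0, by omega⟩ ⟨1, by omega⟩ hj12 (t - 2) Finset.univ
    (by
      rw [Finset.coe_univ, Set.image_univ, hr]
      omega)
  refine ⟨J, ?_, rest⟩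
  simpa [Finset.card_univ] using hcard
end

section
/- Let q be a prime power, H ∈ 𝔽_q^{r×n}, and let C = ker(H) be a linear code with minimum distance d(C) ≥ d. Let 0 < E ≤ E⁺ < d and K ≥ 2, and set γ := (d − E)/d and B_{E,E⁺} := ⌊(E⁺ + 1)/(E⁺ − E + 1)⌋. Let s₀, s₁ ∈ 𝔽_q^r with dim_{𝔽_q} span{s₀,s₁} = 2 and L = {s₀ + α s₁ : α ∈ 𝔽_q}. Suppose there exist pairwise distinct α₁,…,α_K ∈ 𝔽_q and a matrix X = [x₁|⋯|x_K] ∈ 𝔽_q^{n×K} of rank t with Hx_j = s₀ + α_j s₁ and wt(x_j) ≤ E for all j ∈ [K]. If L ⊄ H_{E⁺}, then K·γ^{t−2} ≤ B_{E,E⁺}. -/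
set_option maxHeartbeats 1000000

section Aux

open Finset

variable {F : Type} [Field F] [Fintype F] [DecidableEq F] {r n : ℕ}

set_option linter.unusedSectionVars false

lemma line_count {F : Type} [Field F] [Fintype F] [DecidableEq F] {n : ℕ}
    (E Ep : ℕ) (hEEp : E ≤ Ep) {K : ℕ}
    (u v : Fin n → F) (α : Fin K → F) (hα : Function.Injective α)
    (hgood : ∀ j, hammingNorm (u + α j • v) ≤ E)
    (β : F) (hbad : Ep < hammingNorm (u + β • v)) :
    K * (Ep - E + 1) ≤ Ep + 1 := by
  classical
  set U : Finset (Fin n) := Finset.univ.filter (fun i => u i ≠ 0 ∨ v i ≠ 0) with hU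
  set Z : F → Finset (Fin n) := fun β => U.filter (fun i => u i + β * v i = 0) with hZ
  have hZsub : ∀ β, Z β ⊆ U := fun β => Finset.filter_subset _ _
  have hwt : ∀ β : F, hammingNorm (u + β • v) = U.card - (Z β).card := by
    intro β
    have h1 : (Finset.univ.filter fun i => (u + β • v) i ≠ 0) = U \ Z β := by
      ext i
      simp only [Finset.mem_filter, Finset.mem_sdiff, Finset.mem_univ, true_and,
        Pi.add_apply, Pi.smul_apply, smul_eq_mul, hU, hZ]
      constructor
      · intro h
        have hi : u i ≠ 0 ∨ v i ≠ 0 := by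
          by_contra hc
          push_neg at hc
          simp [hc.1, hc.2] at h
        exact ⟨hi, fun hc => h hc.2⟩
      · rintro ⟨hi, h2⟩
        intro hc
        exact h2 ⟨hi, hc⟩
    have : hammingNorm (u + β • v) = (Finset.univ.filter fun i => (u + β • v) i ≠ 0).card := rfl
    rw [this, h1, Finset.card_sdiff_of_subset (hZsub β)]
  -- disjointness
  have hdisj : ∀ β₁ β₂ : F, β₁ ≠ β₂ → Disjoint (Z β₁) (Z β₂) := by
    intro β₁ β₂ hne
    rw [Finset.disjoint_left]
    intro i h1 h2
    simp only [hZ, Finset.mem_filter, hU, Finset.mem_univ, true_and] at h1 h2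
    obtain ⟨hiU, e1⟩ := h1
    obtain ⟨-, e2⟩ := h2
    have hv : v i = 0 := by
      have : (β₁ - β₂) * v i = 0 := by ring_nf; linear_combination e1 - e2
      rcases mul_eq_zero.1 this with h | h
      · exact absurd (sub_eq_zero.1 h) hne
      · exact h
    have hu : u i = 0 := by have := e1; rw [hv] at this; simpa using this
    rcases hiU with h | h <;> [exact h hu; exact h hv]
  have hsum : ∑ j : Fin K, (Z (α j)).card ≤ U.card := by
    rw [← Finset.card_biUnion (fun j _ k _ hjk => hdisj _ _ (fun h => hjk (hα h)))]
    exact Finset.card_le_card (Finset.biUnion_subset.2 fun j _ => hZsub _)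
  have hZl : ∀ j, U.card - E ≤ (Z (α j)).card := by
    intro j
    have h1 := hgood j
    rw [hwt (α j)] at h1
    have h2 := Finset.card_le_card (hZsub (α j))
    omega
  have hs : Ep + 1 ≤ U.card := by
    rw [hwt β] at hbad
    omega
  have key : K * (U.card - E) ≤ U.card := by
    calc K * (U.card - E) = ∑ _j : Fin K, (U.card - E) := by
          simp [Finset.sum_const, mul_comm]
      _ ≤ ∑ j : Fin K, (Z (α j)).card := Finset.sum_le_sum fun j _ => hZl j
      _ ≤ U.card := hsum
  rcases Nat.eq_zero_or_pos K with h | hKpos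
  · simp [h]
  set s := U.card with hsdef
  have hc : s - E = (Ep - E + 1) + (s - (Ep + 1)) := by omega
  have h2 : s - (Ep + 1) ≤ K * (s - (Ep + 1)) := Nat.le_mul_of_pos_left _ hKpos
  have h3 : K * (Ep - E + 1) + K * (s - (Ep + 1)) ≤ (Ep + 1) + (s - (Ep + 1)) := by
    rw [← Nat.mul_add, ← hc]
    omega
  omega

lemma aux_finrank_span_pair_le {a b : Fin r → F} (c : F) (h : a = c • b) :
    Module.finrank F (Submodule.span F ({a, b} : Set (Fin r → F))) ≤ 1 := by
  have hle : Submodule.span F ({a, b} : Set (Fin r → F)) ≤ Submodule.span F {b} := by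
    rw [Submodule.span_le]
    rintro z (rfl | rfl)
    · exact Submodule.mem_span_singleton.2 ⟨c, h.symm⟩
    · exact Submodule.subset_span rfl
  refine le_trans (Submodule.finrank_mono hle) ?_
  by_cases hb : b = (0 : Fin r → F)
  · rw [hb, Submodule.span_zero_singleton]
    rw [finrank_bot]
    omega
  · exact le_of_eq (finrank_span_singleton hb)

lemma indep_of_finrank_two {s₀ s₁ : Fin r → F}
    (hdim : Module.finrank F (Submodule.span F ({s₀, s₁} : Set (Fin r → F))) = 2) :
    ∀ p q : F, p • s₀ + q • s₁ = 0 → p = 0 ∧ q = 0 := by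
  intro p q h
  by_cases hp : p = 0
  · refine ⟨hp, ?_⟩
    by_contra hq
    rw [hp, zero_smul, zero_add] at h
    have hs₁ : s₁ = 0 := by
      have := congrArg (fun z => q⁻¹ • z) h
      simpa [smul_smul, inv_mul_cancel₀ hq] using this
    have : Module.finrank F (Submodule.span F ({s₀, s₁} : Set (Fin r → F))) ≤ 1 := by
      have hpair : ({s₀, s₁} : Set (Fin r → F)) = {s₁, s₀} := by
        simp [Set.insert_comm, Set.pair_comm]
      rw [hpair]
      exact aux_finrank_span_pair_le 0 (by simp [hs₁])
    omega
  · exfalso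
    have hs₀ : s₀ = (-q / p) • s₁ := by
      have h2 : p • s₀ = -(q • s₁) := by linear_combination (norm := module) h
      have h3 := congrArg (fun z => p⁻¹ • z) h2
      simp only [smul_smul, inv_mul_cancel₀ hp, one_smul, smul_neg] at h3
      rw [h3]
      match_scalars
      field_simp
    have := aux_finrank_span_pair_le (-q / p) hs₀
    omega

lemma line_repr (H : Matrix (Fin r) (Fin n) F) {s₀ s₁ : Fin r → F}
    (hindep : ∀ p q : F, p • s₀ + q • s₁ = 0 → p = 0 ∧ q = 0)
    {α0 α1 : F} (hne : α0 ≠ α1) {x0 x1 : Fin n → F}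
    (h0 : H.mulVec x0 = s₀ + α0 • s₁) (h1 : H.mulVec x1 = s₀ + α1 • s₁) :
    ∃ u v : Fin n → F, H.mulVec u = s₀ ∧ H.mulVec v = s₁ ∧
      u ∈ Submodule.span F ({x0, x1} : Set (Fin n → F)) ∧
      v ∈ Submodule.span F ({x0, x1} : Set (Fin n → F)) ∧
      ∀ (β : F) (y : Fin n → F), y ∈ Submodule.span F ({x0, x1} : Set (Fin n → F)) →
        H.mulVec y = s₀ + β • s₁ → y = u + β • v := by
  set δ : F := α1 - α0 with hδ
  have hδ0 : δ ≠ 0 := sub_ne_zero.2 (Ne.symm hne)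
  set v : Fin n → F := δ⁻¹ • (x1 - x0) with hv
  set u : Fin n → F := x0 - α0 • v with hu
  have hHv : H.mulVec v = s₁ := by
    rw [hv, Matrix.mulVec_smul, Matrix.mulVec_sub, h0, h1]
    match_scalars <;> field_simp <;> simp [hδ]
  have hHu : H.mulVec u = s₀ := by
    rw [hu, Matrix.mulVec_sub, Matrix.mulVec_smul, h0, hHv]
    module
  have hx10 : x1 - x0 = δ • v := by
    rw [hv, smul_smul, mul_inv_cancel₀ hδ0, one_smul]
  have humem : u ∈ Submodule.span F ({x0, x1} : Set (Fin n → F)) := by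
    rw [hu, hv]
    have h0m : x0 ∈ Submodule.span F ({x0, x1} : Set (Fin n → F)) :=
      Submodule.subset_span (by simp)
    have h1m : x1 ∈ Submodule.span F ({x0, x1} : Set (Fin n → F)) :=
      Submodule.subset_span (by simp)
    exact Submodule.sub_mem _ h0m (Submodule.smul_mem _ _
      (Submodule.smul_mem _ _ (Submodule.sub_mem _ h1m h0m)))
  have hvmem : v ∈ Submodule.span F ({x0, x1} : Set (Fin n → F)) := by
    rw [hv]
    have h0m : x0 ∈ Submodule.span F ({x0, x1} : Set (Fin n → F)) :=
      Submodule.subset_span (by simp)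
    have h1m : x1 ∈ Submodule.span F ({x0, x1} : Set (Fin n → F)) :=
      Submodule.subset_span (by simp)
    exact Submodule.smul_mem _ _ (Submodule.sub_mem _ h1m h0m)
  refine ⟨u, v, hHu, hHv, humem, hvmem, ?_⟩
  intro β y hys hy
  obtain ⟨a, b, hab⟩ := Submodule.mem_span_pair.1 hys
  have hsynd : (a + b - 1) • s₀ + (a * α0 + b * α1 - β) • s₁ = 0 := by
    have h2 : H.mulVec y = a • (s₀ + α0 • s₁) + b • (s₀ + α1 • s₁) := by
      rw [← hab, Matrix.mulVec_add, Matrix.mulVec_smul, Matrix.mulVec_smul, h0, h1]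
    rw [hy] at h2
    linear_combination (norm := module) -h2
  obtain ⟨e1, e2⟩ := hindep _ _ hsynd
  have hab1 : a + b = 1 := by linear_combination e1
  have hb : b * δ = β - α0 := by linear_combination e2 - α0 * e1
  -- y = u + β • v
  rw [← hab, hu, hv]
  have ha : a = 1 - b := by linear_combination hab1
  rw [ha]
  have hbb : (β - α0) * (α1 - α0)⁻¹ = b := by
    rw [← hδ]
    field_simp
    linear_combination -hb
  match_scalars
  · linear_combination hbb
  · linear_combination -hbb

lemma master (H : Matrix (Fin r) (Fin n) F) (d E Ep : ℕ)
    (hE0 : 0 < E) (hEEp : E ≤ Ep) (hEpd : Ep < d)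
    (hdist : ∀ c : Fin n → F, H.mulVec c = 0 → c ≠ 0 → d ≤ hammingNorm c)
    (γ : ℝ) (hγ : γ = ((d : ℝ) - E) / d)
    {s₀ s₁ : Fin r → F}
    (hindep : ∀ p q : F, p • s₀ + q • s₁ = 0 → p = 0 ∧ q = 0)
    (a₀ : F) (ha₀ : (s₀ + a₀ • s₁) ∉ syndromeBall H Ep) :
    ∀ m K : ℕ, 2 ≤ K → ∀ α : Fin K → F, Function.Injective α →
      ∀ x : Fin K → Fin n → F,
      (∀ j, H.mulVec (x j) = s₀ + α j • s₁ ∧ hammingNorm (x j) ≤ E) →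
      Module.finrank F (Submodule.span F (Set.range x)) ≤ m + 2 →
      (K : ℝ) * γ ^ m ≤ (((Ep + 1) / (Ep - E + 1) : ℕ) : ℝ) := by
  have hdR : (0:ℝ) < d := by
    have : 0 < d := by omega
    exact_mod_cast this
  have hER : (E:ℝ) < d := by exact_mod_cast (by omega : E < d)
  have hγ0 : 0 ≤ γ := by
    rw [hγ]
    apply div_nonneg <;> linarith
  have hγ1 : γ ≤ 1 := by
    rw [hγ, div_le_one hdR]
    have : (0:ℝ) ≤ (E:ℝ) := by positivity
    linarith
  intro m
  induction m with
  | zero =>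
    intro K hK α hα x hwit hrk
    have h0K : 0 < K := by omega
    have h1K : 1 < K := by omega
    set j0 : Fin K := ⟨0, h0K⟩ with hj0
    set j1 : Fin K := ⟨1, h1K⟩ with hj1
    have hj01 : j0 ≠ j1 := by simp [hj0, hj1, Fin.ext_iff]
    have hane : α j0 ≠ α j1 := fun h => hj01 (hα h)
    obtain ⟨u, v, hHu, hHv, humem, hvmem, hrep⟩ :=
      line_repr H hindep hane (hwit j0).1 (hwit j1).1
    -- x j0, x j1 linearly independent
    have hxind : ∀ p q : F, p • x j0 + q • x j1 = 0 → p = 0 ∧ q = 0 := by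
      intro p q h
      have h3 : H.mulVec (p • x j0 + q • x j1) = 0 := by rw [h, Matrix.mulVec_zero]
      rw [Matrix.mulVec_add, Matrix.mulVec_smul, Matrix.mulVec_smul,
        (hwit j0).1, (hwit j1).1] at h3
      have h2 : (p + q) • s₀ + (p * α j0 + q * α j1) • s₁ = 0 := by
        linear_combination (norm := module) h3
      obtain ⟨e1, e2⟩ := hindep _ _ h2
      have hp : p = 0 := by
        by_contra hp
        apply hane
        have h4 : p * (α j0 - α j1) = 0 := by linear_combination e2 - α j1 * e1
        rcases mul_eq_zero.1 h4 with h5 | h5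
        · exact absurd h5 hp
        · exact sub_eq_zero.1 h5
      refine ⟨hp, ?_⟩
      rw [hp, zero_add] at e1
      exact e1
    have hli : LinearIndependent F ![x j0, x j1] := LinearIndependent.pair_iff.2 hxind
    have hfr2 : Module.finrank F
        (Submodule.span F ({x j0, x j1} : Set (Fin n → F))) = 2 := by
      have h5 := finrank_span_eq_card hli
      have hrange : Set.range ![x j0, x j1] = ({x j0, x j1} : Set (Fin n → F)) := by
        simp [Matrix.range_cons, Matrix.range_empty, Set.pair_comm]
      rw [hrange] at h5
      simpa using h5
    have hPle : Submodule.span F ({x j0, x j1} : Set (Fin n → F)) ≤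
        Submodule.span F (Set.range x) := by
      apply Submodule.span_mono
      rintro z (rfl | rfl) <;> exact Set.mem_range_self _
    have hPeq := Submodule.eq_of_le_of_finrank_le hPle (by omega)
    have hxline : ∀ j, x j = u + α j • v := fun j =>
      hrep (α j) (x j) (hPeq ▸ Submodule.subset_span (Set.mem_range_self j)) (hwit j).1
    have hbad : Ep < hammingNorm (u + a₀ • v) := by
      by_contra hlt
      push_neg at hlt
      exact ha₀ ⟨u + a₀ • v, hlt, by rw [Matrix.mulVec_add, Matrix.mulVec_smul, hHu, hHv]⟩
    have hlc := line_count E Ep hEEp u v α hα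
      (fun j => by rw [← hxline j]; exact (hwit j).2) a₀ hbad
    have hKB : K ≤ (Ep + 1) / (Ep - E + 1) := (Nat.le_div_iff_mul_le (by omega)).2 hlc
    simpa using (Nat.cast_le.2 hKB : (K:ℝ) ≤ _)
  | succ m ih =>
    intro K hK α hα x hwit hrk
    by_cases hle : Module.finrank F (Submodule.span F (Set.range x)) ≤ m + 2
    · have h := ih K hK α hα x hwit hle
      have hBpos : (0:ℝ) ≤ (((Ep + 1) / (Ep - E + 1) : ℕ) : ℝ) := by positivity
      calc (K : ℝ) * γ ^ (m+1) = ((K:ℝ) * γ ^ m) * γ := by ring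
        _ ≤ (((Ep + 1) / (Ep - E + 1) : ℕ) : ℝ) * 1 :=
            mul_le_mul h hγ1 hγ0 hBpos
        _ = _ := mul_one _
    · have h3 : Module.finrank F (Submodule.span F (Set.range x)) = m + 3 := by omega
      have h0K : 0 < K := by omega
      have h1K : 1 < K := by omega
      set j0 : Fin K := ⟨0, h0K⟩ with hj0
      set j1 : Fin K := ⟨1, h1K⟩ with hj1
      have hj01 : j0 ≠ j1 := by simp [hj0, hj1, Fin.ext_iff]
      have hane : α j0 ≠ α j1 := fun h => hj01 (hα h)
      obtain ⟨u, v, hHu, hHv, humem, hvmem, hrep⟩ :=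
        line_repr H hindep hane (hwit j0).1 (hwit j1).1
      set V := Submodule.span F (Set.range x) with hV
      have hPleV : Submodule.span F ({x j0, x j1} : Set (Fin n → F)) ≤ V := by
        apply Submodule.span_mono
        rintro z (rfl | rfl) <;> exact Set.mem_range_self _
      obtain ⟨js, hjs⟩ : ∃ js, x js ∉ Submodule.span F ({x j0, x j1} : Set (Fin n → F)) := by
        by_contra hcon
        push_neg at hcon
        have hVle : V ≤ Submodule.span F ({x j0, x j1} : Set (Fin n → F)) :=
          Submodule.span_le.2 (by rintro z ⟨j, rfl⟩; exact hcon j)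
        have h4 := Submodule.finrank_mono hVle
        have h5 : Module.finrank F
            (Submodule.span F ({x j0, x j1} : Set (Fin n → F))) ≤ 2 := by
          refine le_trans (finrank_span_le_card _) ?_
          rw [Set.toFinset_insert, Set.toFinset_singleton]
          exact (Finset.card_insert_le _ _).trans (by simp)
        omega
      set c : Fin n → F := x js - (u + α js • v) with hc
      have hcV : c ∈ V := by
        refine Submodule.sub_mem _ (Submodule.subset_span (Set.mem_range_self _)) ?_
        exact Submodule.add_mem _ (hPleV humem) (Submodule.smul_mem _ _ (hPleV hvmem))
      have hc0 : c ≠ 0 := by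
        intro h
        apply hjs
        have hxe : x js = u + α js • v := by
          have := sub_eq_zero.1 h
          exact this
        rw [hxe]
        exact Submodule.add_mem _ humem (Submodule.smul_mem _ _ hvmem)
      have hHc : H.mulVec c = 0 := by
        rw [hc, Matrix.mulVec_sub, Matrix.mulVec_add, Matrix.mulVec_smul,
          (hwit js).1, hHu, hHv, sub_self]
      have hdc : d ≤ hammingNorm c := hdist c hHc hc0
      set S : Finset (Fin n) := Finset.univ.filter (fun i => c i ≠ 0) with hS
      have hScard : hammingNorm c = S.card := rfl
      have hdS : d ≤ S.card := hScard ▸ hdc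
      have hSne : S.Nonempty := Finset.card_pos.1 (by omega)
      set f : Fin n → ℕ := fun i => (Finset.univ.filter (fun j : Fin K => x j i = 0)).card
        with hf
      set g : Fin n → ℕ := fun i => (Finset.univ.filter (fun j : Fin K => x j i ≠ 0)).card
        with hg
      have hfg : ∀ i, f i + g i = K := by
        intro i
        have h6 := Finset.card_filter_add_card_filter_not
          (s := (Finset.univ : Finset (Fin K))) (p := fun j => x j i = 0)
        simpa [hf, hg] using h6
      have hgsum : ∑ i ∈ S, g i ≤ K * E := by
        have hswap : ∑ i ∈ S, g i = ∑ j : Fin K, (S.filter (fun i => x j i ≠ 0)).card := by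
          simp only [hg, Finset.card_filter]
          exact Finset.sum_comm
        rw [hswap]
        calc ∑ j : Fin K, (S.filter (fun i => x j i ≠ 0)).card
            ≤ ∑ _j : Fin K, E := by
              refine Finset.sum_le_sum fun j _ => ?_
              refine le_trans (Finset.card_le_card
                (Finset.filter_subset_filter _ (Finset.subset_univ S))) ?_
              exact (hwit j).2
          _ = K * E := by simp [Finset.sum_const, mul_comm]
      have hES : E ≤ S.card := by omega
      have hfsum : K * (S.card - E) ≤ ∑ i ∈ S, f i := by
        have h7 : ∑ i ∈ S, f i + ∑ i ∈ S, g i = K * S.card := by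
          rw [← Finset.sum_add_distrib]
          calc ∑ i ∈ S, (f i + g i) = ∑ _i ∈ S, K := Finset.sum_congr rfl fun i _ => hfg i
            _ = K * S.card := by simp [Finset.sum_const, mul_comm]
        have h8 : K * (S.card - E) + K * E = K * S.card := by
          rw [← Nat.mul_add]
          congr 1
          omega
        omega
      obtain ⟨i, hiS, hi⟩ : ∃ i ∈ S, K * (S.card - E) ≤ S.card * f i := by
        apply Finset.exists_le_of_sum_le hSne
        calc ∑ _i ∈ S, K * (S.card - E) = S.card * (K * (S.card - E)) := by
              simp [Finset.sum_const, mul_comm]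
          _ ≤ S.card * ∑ i ∈ S, f i := Nat.mul_le_mul_left _ hfsum
          _ = ∑ i ∈ S, S.card * f i := Finset.mul_sum _ _ _
      set J : Finset (Fin K) := Finset.univ.filter (fun j => x j i = 0) with hJ
      have hJcard : J.card = f i := rfl
      have hsR : (0:ℝ) < (S.card : ℝ) := by
        have : 0 < S.card := by omega
        exact_mod_cast this
      have hc1 : (K:ℝ) * ((S.card:ℝ) - E) ≤ (S.card:ℝ) * (J.card:ℝ) := by
        have h9 : ((K * (S.card - E) : ℕ) : ℝ) ≤ ((S.card * f i : ℕ) : ℝ) := Nat.cast_le.2 hi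
        rw [hJcard]
        push_cast [Nat.cast_sub hES] at h9 ⊢
        linarith
      have h2 : γ * (S.card:ℝ) ≤ (S.card:ℝ) - E := by
        rw [hγ, div_mul_eq_mul_div, div_le_iff₀ hdR]
        have hdS' : (d:ℝ) ≤ (S.card:ℝ) := by exact_mod_cast hdS
        nlinarith
      have hKγ : (K:ℝ) * γ ≤ (J.card:ℝ) := by
        rw [← mul_le_mul_iff_of_pos_right hsR]
        have h10 : (K:ℝ) * (γ * (S.card:ℝ)) ≤ (K:ℝ) * ((S.card:ℝ) - E) :=
          mul_le_mul_of_nonneg_left h2 (by positivity)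
        nlinarith
      by_cases hK2 : 2 ≤ J.card
      · set e := J.orderEmbOfFin rfl with he
        have hrk' : Module.finrank F (Submodule.span F (Set.range (x ∘ e))) ≤ m + 2 := by
          set W := LinearMap.ker (LinearMap.proj (R := F) (φ := fun _ : Fin n => F) i)
            with hW
          have hsub : Submodule.span F (Set.range (x ∘ e)) ≤ V ⊓ W := by
            rw [Submodule.span_le]
            rintro z ⟨k, rfl⟩
            refine ⟨Submodule.subset_span (Set.mem_range_self _), ?_⟩
            have hmem := J.orderEmbOfFin_mem rfl k
            have h13 : x ((J.orderEmbOfFin rfl) k) i = 0 := (Finset.mem_filter.1 hmem).2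
            exact LinearMap.mem_ker.2 h13
          have hlt : V ⊓ W < V := by
            refine lt_of_le_of_ne inf_le_left ?_
            intro hEq
            have hcW : c ∈ V ⊓ W := hEq.symm ▸ hcV
            have hci0 : c i = 0 := hcW.2
            have hci : c i ≠ 0 := by
              have := (Finset.mem_filter.1 hiS).2
              exact this
            exact hci hci0
          have h11 := Submodule.finrank_lt_finrank_of_lt hlt
          have h12 := Submodule.finrank_mono hsub
          omega
        have hres := ih J.card hK2 (α ∘ e) (hα.comp e.injective) (x ∘ e)
          (fun k => hwit (e k)) hrk'
        calc (K:ℝ) * γ ^ (m+1) = ((K:ℝ) * γ) * γ ^ m := by ring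
          _ ≤ (J.card : ℝ) * γ ^ m := mul_le_mul_of_nonneg_right hKγ (by positivity)
          _ ≤ _ := hres
      · have hB1 : (1:ℝ) ≤ (((Ep + 1) / (Ep - E + 1) : ℕ) : ℝ) := by
          have : 1 ≤ (Ep + 1) / (Ep - E + 1) := (Nat.one_le_div_iff (by omega)).2 (by omega)
          exact_mod_cast this
        have hJle : J.card ≤ 1 := by omega
        have hJ1 : (J.card : ℝ) ≤ 1 := by
          have h14 := (Nat.cast_le (α := ℝ)).2 hJle
          simpa using h14
        have hKγ1 : (K:ℝ) * γ ≤ 1 := hKγ.trans hJ1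
        have hpow0 : (0:ℝ) ≤ γ ^ m := by positivity
        have hpow1 : γ ^ m ≤ 1 := pow_le_one₀ hγ0 hγ1
        have hKγnn : (0:ℝ) ≤ (K:ℝ) * γ := by positivity
        calc (K:ℝ) * γ ^ (m+1) = ((K:ℝ) * γ) * γ ^ m := by ring
          _ ≤ 1 * 1 := mul_le_mul hKγ1 hpow1 hpow0 (by linarith)
          _ ≤ _ := by linarith

end Aux

/-- Minimum witness rank threshold: a bad syndrome line (with an `E`-witness matrix of
rank `t` covering `K` points, but not contained in `H_{E⁺}`) satisfies
`K·γ^{t−2} ≤ ⌊(E⁺+1)/(E⁺−E+1)⌋`. -/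
theorem stmt_8 {F : Type} [Field F] [Fintype F] [DecidableEq F] {r n : ℕ}
    (H : Matrix (Fin r) (Fin n) F) (d E Ep : ℕ)
    (hE0 : 0 < E) (hEEp : E ≤ Ep) (hEpd : Ep < d)
    (hdist : ∀ c : Fin n → F, H.mulVec c = 0 → c ≠ 0 → d ≤ hammingNorm c)
    (K : ℕ) (hK : 2 ≤ K)
    (γ : ℝ) (hγ : γ = ((d : ℝ) - E) / d)
    (B : ℕ) (hB : B = (Ep + 1) / (Ep - E + 1))
    (s₀ s₁ : Fin r → F)
    (hdim : Module.finrank F (Submodule.span F ({s₀, s₁} : Set (Fin r → F))) = 2)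
    (α : Fin K → F) (hα : Function.Injective α)
    (x : Fin K → Fin n → F)
    (hwit : ∀ j : Fin K, H.mulVec (x j) = s₀ + α j • s₁ ∧ hammingNorm (x j) ≤ E)
    (t : ℕ) (hrank : (Matrix.of fun (i : Fin n) (j : Fin K) => x j i).rank = t)
    (hnot : ¬ {u : Fin r → F | ∃ a : F, u = s₀ + a • s₁} ⊆ syndromeBall H Ep) :
    (K : ℝ) * γ ^ (t - 2) ≤ (B : ℝ) := by
  have hindep := indep_of_finrank_two hdim
  -- extract the bad point on the line
  obtain ⟨w, hwL, hwnot⟩ := Set.not_subset.1 hnot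
  obtain ⟨a₀, rfl⟩ := hwL
  -- rank = finrank of span of columns
  have hfr : Module.finrank F (Submodule.span F (Set.range x)) = t := by
    rw [← hrank, Matrix.rank_eq_finrank_span_cols]
    congr 2
  have hrk2 : Module.finrank F (Submodule.span F (Set.range x)) ≤ (t - 2) + 2 := by
    omega
  have := master H d E Ep hE0 hEEp hEpd hdist γ hγ hindep a₀ hwnot (t - 2) K hK α hα x
    hwit hrk2
  rw [hB]
  exact this
end

section
/- Let q be a prime power and let r, n be positive integers. Let 0 < E ≤ E⁺ be integers with E < d, let s ≥ 0 be an integer, and set γ := (d − E)/d and B_{E,E⁺} := ⌊(E⁺ + 1)/(E⁺ − E + 1)⌋. Assume K ≥ 2 is an integer with K > B_{E,E⁺}·γ^{−s}. Then, for H drawn uniformly at random from 𝔽_q^{r×n} with C := ker(H), the probability that there exists an affine syndrome line L = {s₀ + α s₁ : α ∈ 𝔽_q} ⊆ 𝔽_q^r such that |L ∩ H_E| ≥ K, L ⊄ H_{E⁺}, and the minimum distance of C is at least d, is at most q^{2r}·C(q,K)·C(K,s+3)·|B_E|^{s+3}·q^{−r(s+3)}, where C(a,b) denotes the binomial coefficient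 and |B_E| = Σ_{i=0}^{E} C(n,i)(q−1)^i. -/
open Finset Module Submodule

set_option linter.unusedSectionVars false
set_option maxHeartbeats 1600000

section Aux

variable {F : Type} [Field F] [Fintype F] [DecidableEq F] {r n : ℕ}

lemma ball_card_le (E : ℕ) :
    ((univ : Finset (Fin n → F)).filter fun x => hammingNorm x ≤ E).card ≤
      ∑ i ∈ Finset.range (E + 1), n.choose i * (Fintype.card F - 1) ^ i := by
  classical
  rw [Finset.card_eq_sum_card_fiberwise
    (f := fun x : Fin n → F => hammingNorm x) (t := Finset.range (E + 1))
    (fun x hx => by simp only [Finset.mem_coe, Finset.mem_filter] at hx; simpa using Nat.lt_succ_of_le hx.2)]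
  refine Finset.sum_le_sum fun i _ => ?_
  calc ((univ.filter fun x : Fin n → F => hammingNorm x ≤ E).filter
        fun x => hammingNorm x = i).card
      ≤ ((univ : Finset (Fin n → F)).filter fun x => hammingNorm x = i).card := by
        apply Finset.card_le_card
        intro x hx
        simp only [Finset.mem_filter] at hx ⊢
        exact ⟨Finset.mem_univ _, hx.2⟩
    _ ≤ n.choose i * (Fintype.card F - 1) ^ i := by
        rw [Finset.card_eq_sum_card_fiberwise
          (f := fun x : Fin n → F => univ.filter fun j => x j ≠ 0)
          (t := Finset.powersetCard i univ)
          (fun x hx => by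
            simp only [Finset.mem_coe, Finset.mem_filter] at hx
            rw [Finset.mem_coe, Finset.mem_powersetCard]
            exact ⟨Finset.subset_univ _, hx.2⟩)]
        have hfib : ∀ s ∈ Finset.powersetCard i (univ : Finset (Fin n)),
            ((univ.filter fun x : Fin n → F => hammingNorm x = i).filter
              fun x => (univ.filter fun j => x j ≠ 0) = s).card
              ≤ (Fintype.card F - 1) ^ i := by
          intro s hs
          rw [Finset.mem_powersetCard] at hs
          refine (Finset.card_le_card_of_injOn
            (t := s.pi fun _ => (univ.filter fun c : F => c ≠ 0))
            (fun (x : Fin n → F) => (fun a (_ : a ∈ s) => x a)) ?_ ?_).trans ?_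
          · intro x hx
            simp only [Finset.mem_coe, Finset.mem_filter] at hx
            rw [Finset.mem_coe, Finset.mem_pi]
            intro a ha
            simp only [Finset.mem_filter, Finset.mem_univ, true_and]
            have := hx.2 ▸ ha
            simpa using (Finset.mem_filter.mp this).2
          · intro x hx y hy hxy
            simp only [Finset.mem_coe, Finset.mem_filter] at hx hy
            funext a
            by_cases ha : a ∈ s
            · exact congrFun (congrFun hxy a) ha
            · have hxa : x a = 0 := by
                by_contra h
                exact ha (hx.2 ▸ Finset.mem_filter.mpr ⟨Finset.mem_univ _, h⟩)
              have hya : y a = 0 := by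
                by_contra h
                exact ha (hy.2 ▸ Finset.mem_filter.mpr ⟨Finset.mem_univ _, h⟩)
              rw [hxa, hya]
          · rw [Finset.card_pi]
            have hcol : ((univ : Finset F).filter fun c => c ≠ 0).card
                = Fintype.card F - 1 := by
              rw [Finset.filter_ne', Finset.card_erase_of_mem (Finset.mem_univ _),
                Finset.card_univ]
            rw [Finset.prod_congr rfl fun a _ => hcol, Finset.prod_const, hs.2]
        calc _ ≤ ∑ _s ∈ Finset.powersetCard i (univ : Finset (Fin n)),
              (Fintype.card F - 1) ^ i := Finset.sum_le_sum hfib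
          _ = n.choose i * (Fintype.card F - 1) ^ i := by
              rw [Finset.sum_const, Finset.card_powersetCard, Finset.card_univ,
                Fintype.card_fin, smul_eq_mul]

lemma count_fiber (k : ℕ) (v : Fin k → (Fin n → F)) (hv : LinearIndependent F v)
    (t : Fin k → (Fin r → F)) :
    ((univ : Finset (Matrix (Fin r) (Fin n) F)).filter
        fun H => ∀ i, H.mulVec (v i) = t i).card ≤ (Fintype.card F) ^ (r * (n - k)) := by
  classical
  set X : Matrix (Fin k) (Fin n) F := Matrix.of v with hX
  set L : (Fin n → F) →ₗ[F] (Fin k → F) := X.mulVecLin with hL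
  have hrank : finrank F (LinearMap.range L) = k := by
    have h1 : X.rank = Fintype.card (Fin k) := LinearIndependent.rank_matrix hv
    rw [Matrix.rank] at h1
    simpa using h1
  have hker : finrank F (LinearMap.ker L) = n - k := by
    have h2 := LinearMap.finrank_range_add_finrank_ker L
    have h3 : finrank F (Fin n → F) = n := by simp
    have hkn : k ≤ n := by
      have := hv.fintype_card_le_finrank
      simpa using this
    omega
  haveI : Fintype (LinearMap.ker L) := Fintype.ofFinite _
  have hcard : Fintype.card (LinearMap.ker L) = (Fintype.card F) ^ (n - k) := by
    rw [card_eq_pow_finrank (K := F), hker]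
  -- per-row fiber bound
  have hrow : ∀ c : Fin k → F,
      ((univ : Finset (Fin n → F)).filter fun h => L h = c).card
        ≤ (Fintype.card F) ^ (n - k) := by
    intro c
    rcases Finset.eq_empty_or_nonempty ((univ : Finset (Fin n → F)).filter fun h => L h = c)
      with he | ⟨h₀, hh₀⟩
    · simp [he]
    · simp only [Finset.mem_filter] at hh₀
      rw [← hcard]
      have : Fintype.card (LinearMap.ker L)
          = ((univ : Finset (Fin n → F)).filter fun h => L h = 0).card := by
        rw [← Fintype.card_subtype]
        exact Fintype.card_congr (Equiv.subtypeEquivRight fun h => LinearMap.mem_ker.symm).symm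
      rw [this]
      apply Finset.card_le_card_of_injOn (fun h => h - h₀)
      · intro a ha
        simp only [Finset.mem_coe, Finset.mem_filter, Finset.mem_univ, true_and] at ha ⊢
        rw [map_sub, ha, hh₀.2, sub_self]
      · intro a _ b _ hab
        simpa using congrArg (· + h₀) hab
  -- decompose matrix condition per row
  have hsplit : ((univ : Finset (Matrix (Fin r) (Fin n) F)).filter
        fun H => ∀ i, H.mulVec (v i) = t i)
      = Fintype.piFinset (fun j : Fin r =>
          (univ : Finset (Fin n → F)).filter fun h => L h = fun i => t i j) := by
    ext H
    simp only [Finset.mem_filter, Finset.mem_univ, true_and]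
    refine Iff.trans ?_ Fintype.mem_piFinset.symm
    simp only [Finset.mem_filter, Finset.mem_univ, true_and]
    constructor
    · intro hH j
      funext i
      have := congrFun (hH i) j
      simp only [hL, Matrix.mulVecLin_apply, Matrix.mulVec, dotProduct] at this ⊢
      rw [← this]
      apply Finset.sum_congr rfl
      intro l _
      simp [hX, mul_comm]
    · intro hH i
      funext j
      have := congrFun (hH j) i
      simp only [hL, Matrix.mulVecLin_apply, Matrix.mulVec, dotProduct] at this ⊢
      rw [← this]
      apply Finset.sum_congr rfl
      intro l _
      simp [hX, mul_comm]
  rw [hsplit]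
  refine (Fintype.card_piFinset _).trans_le ?_
  calc ∏ j : Fin r, ((univ : Finset (Fin n → F)).filter fun h => L h = fun i => t i j).card
      ≤ ∏ _j : Fin r, (Fintype.card F) ^ (n - k) :=
        Finset.prod_le_prod' (fun j _ => hrow _)
    _ = (Fintype.card F) ^ (r * (n - k)) := by
        rw [Finset.prod_const, Finset.card_univ, Fintype.card_fin, ← pow_mul,
          Nat.mul_comm]

lemma swap_count (x : F → Fin n → F) (S : Finset (Fin n)) (A : Finset F) :
    ∑ j ∈ S, (A.filter fun α => x α j ≠ 0).card
      = ∑ α ∈ A, (S.filter fun j => x α j ≠ 0).card := by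
  simp only [Finset.card_filter]
  exact Finset.sum_comm

lemma hnorm_eq (y : Fin n → F) : hammingNorm y = (univ.filter fun j => y j ≠ 0).card := rfl

section Key

variable {H : Matrix (Fin r) (Fin n) F} {E Ep d : ℕ} {s₀ s₁ : Fin r → F} {β : F}

lemma indep01
    (hEEp : E ≤ Ep)
    (hβ : ∀ z : Fin n → F, hammingNorm z ≤ Ep → H.mulVec z ≠ s₀ + β • s₁)
    {A : Finset F} {x : F → Fin n → F}
    (hx1 : ∀ α ∈ A, hammingNorm (x α) ≤ E)
    (hx2 : ∀ α ∈ A, H.mulVec (x α) = s₀ + α • s₁)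
    (hA2 : 2 ≤ A.card) :
    ∀ a b : F, a • s₀ + b • s₁ = 0 → a = 0 ∧ b = 0 := by
  intro a b hab
  by_contra hcon
  obtain ⟨α₁, hα₁, α₂, hα₂, hne⟩ := Finset.one_lt_card.mp (by omega : 1 < A.card)
  by_cases ha : a = 0
  · have hb : b ≠ 0 := fun hb => hcon ⟨ha, hb⟩
    have hs₁ : s₁ = 0 := by
      have h0 : b • s₁ = 0 := by
        rw [ha, zero_smul, zero_add] at hab; exact hab
      rcases smul_eq_zero.mp h0 with h | h
      · exact absurd h hb
      · exact h
    exact hβ (x α₁) ((hx1 _ hα₁).trans hEEp)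
      (by rw [hx2 _ hα₁, hs₁, smul_zero, smul_zero])
  · set σ : F := -(b / a) with hσ
    have hs₀ : s₀ = σ • s₁ := by
      have h1 : a • s₀ = -(b • s₁) := eq_neg_of_add_eq_zero_left hab
      have h2 : s₀ = a⁻¹ • -(b • s₁) := by
        rw [← h1, smul_smul, inv_mul_cancel₀ ha, one_smul]
      rw [h2, smul_neg, smul_smul, hσ, neg_smul, ← neg_smul]
      rw [div_eq_inv_mul, neg_smul]
    -- pick α ∈ A with α ≠ -σ
    have hpick : ∃ α ∈ A, α ≠ -σ := by
      by_cases h1 : α₁ = -σ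
      · exact ⟨α₂, hα₂, fun h => hne (h1.trans h.symm)⟩
      · exact ⟨α₁, hα₁, h1⟩
    obtain ⟨α, hα, hασ⟩ := hpick
    have hσα : σ + α ≠ 0 := fun h => hασ (by linear_combination h)
    set z := ((σ + β) / (σ + α)) • x α with hz
    have hwt : hammingNorm z ≤ Ep :=
      le_trans hammingNorm_smul_le_hammingNorm ((hx1 _ hα).trans hEEp)
    apply hβ z hwt
    rw [hz, Matrix.mulVec_smul, hx2 _ hα, hs₀]
    have h3 : σ • s₁ + α • s₁ = (σ + α) • s₁ := (add_smul σ α s₁).symm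
    rw [h3, smul_smul, div_mul_cancel₀ _ hσα, add_smul]

lemma rank_ge_three
    (hEEp : E ≤ Ep)
    (hβ : ∀ z : Fin n → F, hammingNorm z ≤ Ep → H.mulVec z ≠ s₀ + β • s₁)
    {A : Finset F} {x : F → Fin n → F}
    (hx1 : ∀ α ∈ A, hammingNorm (x α) ≤ E)
    (hx2 : ∀ α ∈ A, H.mulVec (x α) = s₀ + α • s₁)
    (hA2 : 2 ≤ A.card)
    {c : Fin n → F} (hcV : c ∈ span F (x '' ↑A)) (hcK : H.mulVec c = 0) (hc0 : c ≠ 0) :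
    3 ≤ finrank F (span F (x '' ↑A)) := by
  classical
  have hind := indep01 hEEp hβ hx1 hx2 hA2
  obtain ⟨α₁, hα₁, α₂, hα₂, hne⟩ := Finset.one_lt_card.mp (by omega : 1 < A.card)
  set V := span F (x '' ↑A) with hV
  set f : V →ₗ[F] (Fin r → F) := (Matrix.mulVecLin H).domRestrict V with hf
  have hrn := LinearMap.finrank_range_add_finrank_ker f
  have hker1 : 1 ≤ finrank F (LinearMap.ker f) := by
    have hmem : (⟨c, hcV⟩ : V) ∈ LinearMap.ker f := by
      rw [LinearMap.mem_ker, hf, LinearMap.domRestrict_apply, Matrix.mulVecLin_apply, hcK]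
    have hnt : Nontrivial (LinearMap.ker f) := by
      refine nontrivial_of_ne ⟨⟨c, hcV⟩, hmem⟩ 0 ?_
      intro h
      apply hc0
      have h' : (⟨c, hcV⟩ : V) = 0 := Subtype.ext_iff.mp h
      exact Subtype.ext_iff.mp h'
    exact (Module.finrank_pos_iff (R := F)).mpr hnt
  have hy : LinearIndependent F ![s₀ + α₁ • s₁, s₀ + α₂ • s₁] := by
    rw [LinearIndependent.pair_iff]
    intro a b hab
    have h1 : (a + b) • s₀ + (a * α₁ + b * α₂) • s₁ = 0 := by
      rw [← hab]; module
    obtain ⟨h2, h3⟩ := hind _ _ h1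
    have ha : a = 0 := by
      have h4 : a * (α₁ - α₂) = 0 := by linear_combination h3 - α₂ * h2
      rcases mul_eq_zero.mp h4 with h | h
      · exact h
      · exact absurd (sub_eq_zero.mp h) hne
    exact ⟨ha, by linear_combination h2 - ha⟩
  have hrange2 : 2 ≤ finrank F (LinearMap.range f) := by
    have hsub : span F {s₀ + α₁ • s₁, s₀ + α₂ • s₁} ≤ LinearMap.range f := by
      rw [span_le]
      rintro y hy'
      rcases hy' with rfl | rfl
      · exact ⟨⟨x α₁, subset_span (Set.mem_image_of_mem _ (by exact_mod_cast hα₁))⟩,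
          by rw [hf, LinearMap.domRestrict_apply, Matrix.mulVecLin_apply, hx2 _ hα₁]⟩
      · exact ⟨⟨x α₂, subset_span (Set.mem_image_of_mem _ (by exact_mod_cast hα₂))⟩,
          by rw [hf, LinearMap.domRestrict_apply, Matrix.mulVecLin_apply, hx2 _ hα₂]⟩
    have heq : finrank F (span F {s₀ + α₁ • s₁, s₀ + α₂ • s₁}) = 2 := by
      have h5 := finrank_span_eq_card hy
      have h6 : Set.range ![s₀ + α₁ • s₁, s₀ + α₂ • s₁]
          = {s₀ + α₁ • s₁, s₀ + α₂ • s₁} := by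
        simp only [Matrix.range_cons, Matrix.range_empty, Set.union_empty,
          Set.union_singleton]
        exact Set.pair_comm _ _
      rw [h6] at h5
      simpa using h5
    calc 2 = finrank F (span F {s₀ + α₁ • s₁, s₀ + α₂ • s₁}) := heq.symm
      _ ≤ finrank F (LinearMap.range f) := Submodule.finrank_mono hsub
  omega

end Key

section Key2

variable {H : Matrix (Fin r) (Fin n) F} {E Ep d : ℕ} {s₀ s₁ : Fin r → F} {β : F}

lemma case_disjoint (hEEp : E ≤ Ep)
    (hβ : ∀ z : Fin n → F, hammingNorm z ≤ Ep → H.mulVec z ≠ s₀ + β • s₁)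
    {A : Finset F} {x : F → Fin n → F}
    (hx1 : ∀ α ∈ A, hammingNorm (x α) ≤ E)
    (hx2 : ∀ α ∈ A, H.mulVec (x α) = s₀ + α • s₁)
    (hA2 : 2 ≤ A.card)
    (hd : span F (x '' ↑A) ⊓ LinearMap.ker (Matrix.mulVecLin H) = ⊥) :
    A.card * (Ep + 1 - E) ≤ Ep + 1 := by
  classical
  obtain ⟨α₁, hα₁, α₂, hα₂, hne⟩ := Finset.one_lt_card.mp (by omega : 1 < A.card)
  set w : Fin n → F := (α₁ - α₂)⁻¹ • (x α₁ - x α₂) with hwdef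
  have hw : H.mulVec w = s₁ := by
    rw [hwdef, Matrix.mulVec_smul, Matrix.mulVec_sub, hx2 _ hα₁, hx2 _ hα₂]
    have h1 : (s₀ + α₁ • s₁) - (s₀ + α₂ • s₁) = (α₁ - α₂) • s₁ := by module
    rw [h1, smul_smul, inv_mul_cancel₀ (sub_ne_zero.mpr hne), one_smul]
  have hline : ∀ ξ : F, H.mulVec (x α₂ + (ξ - α₂) • w) = s₀ + ξ • s₁ := by
    intro ξ
    rw [Matrix.mulVec_add, Matrix.mulVec_smul, hx2 _ hα₂, hw]
    module
  have hwV : w ∈ span F (x '' ↑A) :=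
    smul_mem _ _ (sub_mem (subset_span (Set.mem_image_of_mem _ (by exact_mod_cast hα₁)))
      (subset_span (Set.mem_image_of_mem _ (by exact_mod_cast hα₂))))
  have haff : ∀ α ∈ A, x α = x α₂ + (α - α₂) • w := by
    intro α hα
    have hmem : x α - (x α₂ + (α - α₂) • w)
        ∈ span F (x '' ↑A) ⊓ LinearMap.ker (Matrix.mulVecLin H) := by
      rw [Submodule.mem_inf]
      constructor
      · exact sub_mem (subset_span (Set.mem_image_of_mem _ (by exact_mod_cast hα)))
          (add_mem (subset_span (Set.mem_image_of_mem _ (by exact_mod_cast hα₂)))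
            (smul_mem _ _ hwV))
      · rw [LinearMap.mem_ker, Matrix.mulVecLin_apply, Matrix.mulVec_sub, hline,
          hx2 _ hα, sub_self]
    rw [hd, Submodule.mem_bot] at hmem
    exact (sub_eq_zero.mp hmem)
  set z := x α₂ + (β - α₂) • w with hzdef
  have hz : ¬ hammingNorm z ≤ Ep := fun h => hβ z h (hline β)
  set Sz := (univ.filter fun j => z j ≠ 0) with hSz
  have hzc : Ep + 1 ≤ Sz.card := by
    rw [hSz, ← hnorm_eq]; omega
  have hcnt : ∀ j ∈ Sz, A.card ≤ (A.filter fun α => x α j ≠ 0).card + 1 := by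
    intro j hj
    have hjne : z j ≠ 0 := (Finset.mem_filter.mp hj).2
    by_cases hwj : w j = 0
    · have hall : ∀ α ∈ A, x α j ≠ 0 := by
        intro α hα
        have h1 : x α j = x α₂ j := by
          rw [haff α hα]; simp [hwj]
        have h2 : z j = x α₂ j := by
          rw [hzdef]; simp [hwj]
        rw [h1, ← h2]; exact hjne
      rw [Finset.filter_eq_self.mpr hall]
      omega
    · have hsub : A.filter (fun α => x α j = 0) ⊆ {α₂ - x α₂ j * (w j)⁻¹} := by
        intro α hα
        obtain ⟨hαA, hα0⟩ := Finset.mem_filter.mp hα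
        rw [haff α hαA] at hα0
        have h1 : x α₂ j + (α - α₂) * w j = 0 := by simpa using hα0
        have h3 : α - α₂ = -(x α₂ j) * (w j)⁻¹ := by
          field_simp
          linear_combination h1
        have h4 : α = α₂ - x α₂ j * (w j)⁻¹ := by linear_combination h3
        simp [h4]
      have h1 : (A.filter fun α => x α j = 0).card ≤ 1 :=
        (Finset.card_le_card hsub).trans (by simp)
      have h2 := Finset.card_filter_add_card_filter_not
        (s := A) (p := fun α => x α j ≠ 0)
      simp only [not_not] at h2
      omega
  have h6 : Sz.card * (A.card - 1) ≤ A.card * E := by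
    calc Sz.card * (A.card - 1) = ∑ _j ∈ Sz, (A.card - 1) := by
          rw [Finset.sum_const, smul_eq_mul]
      _ ≤ ∑ j ∈ Sz, (A.filter fun α => x α j ≠ 0).card :=
          Finset.sum_le_sum (fun j hj => by have := hcnt j hj; omega)
      _ = ∑ α ∈ A, (Sz.filter fun j => x α j ≠ 0).card := swap_count x Sz A
      _ ≤ ∑ α ∈ A, E := Finset.sum_le_sum (fun α hα => by
          refine le_trans ?_ (hx1 α hα)
          rw [hnorm_eq]
          exact Finset.card_le_card (Finset.filter_subset_filter _ (Finset.subset_univ _)))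
      _ = A.card * E := by rw [Finset.sum_const, smul_eq_mul]
  have h7 : (Ep + 1) * (A.card - 1) ≤ A.card * E :=
    le_trans (Nat.mul_le_mul_right _ hzc) h6
  obtain ⟨m, hm⟩ : ∃ m, A.card = m + 2 := ⟨A.card - 2, by omega⟩
  obtain ⟨e, he⟩ : ∃ e, Ep = E + e := ⟨Ep - E, by omega⟩
  rw [hm] at h7 ⊢
  rw [he] at h7 ⊢
  have h8 : E + e + 1 - E = e + 1 := by omega
  rw [h8]
  have h9 : m + 2 - 1 = m + 1 := by omega
  rw [h9] at h7
  nlinarith [h7]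

end Key2

section Key3

variable {H : Matrix (Fin r) (Fin n) F} {E Ep d : ℕ} {s₀ s₁ : Fin r → F} {β : F}

lemma key_lemma (hE0 : 0 < E) (hEEp : E ≤ Ep) (hEd : E < d)
    (hdist : ∀ c : Fin n → F, H.mulVec c = 0 → c ≠ 0 → d ≤ hammingNorm c)
    (hβ : ∀ z : Fin n → F, hammingNorm z ≤ Ep → H.mulVec z ≠ s₀ + β • s₁)
    {γ : ℝ} (hγ : γ = ((d : ℝ) - E) / d) {B : ℕ} (hB : B = (Ep + 1) / (Ep - E + 1))
    (t : ℕ) :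
    ∀ A : Finset F, ∀ x : F → Fin n → F,
      (∀ α ∈ A, hammingNorm (x α) ≤ E) → (∀ α ∈ A, H.mulVec (x α) = s₀ + α • s₁) →
      2 ≤ A.card → finrank F (span F (x '' ↑A)) ≤ t →
      (A.card : ℝ) ≤ B * γ⁻¹ ^ (t - 2) := by
  classical
  have hd0 : (0 : ℝ) < d := by
    have : 0 < d := by omega
    exact_mod_cast this
  have hdE : (E : ℝ) < d := by exact_mod_cast hEd
  have hγpos : 0 < γ := by
    rw [hγ]; exact div_pos (by linarith) hd0
  have hγle1 : γ ≤ 1 := by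
    rw [hγ, div_le_one hd0]
    have : (0:ℝ) ≤ E := by positivity
    linarith
  have hγinv1 : 1 ≤ γ⁻¹ := (one_le_inv_iff₀.mpr ⟨hγpos, hγle1⟩)
  have hB1 : 1 ≤ B := by
    rw [hB]
    rw [Nat.one_le_div_iff (by omega)]
    omega
  have hBR : (1:ℝ) ≤ (B:ℝ) := by exact_mod_cast hB1
  -- shared: disjoint case gives the bound for any exponent k
  have hcase1 : ∀ (A : Finset F) (x : F → Fin n → F),
      (∀ α ∈ A, hammingNorm (x α) ≤ E) → (∀ α ∈ A, H.mulVec (x α) = s₀ + α • s₁) →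
      2 ≤ A.card →
      span F (x '' ↑A) ⊓ LinearMap.ker (Matrix.mulVecLin H) = ⊥ →
      ∀ k : ℕ, (A.card : ℝ) ≤ B * γ⁻¹ ^ k := by
    intro A x hx1 hx2 hA2 hd k
    have h1 := case_disjoint hEEp hβ hx1 hx2 hA2 hd
    have h2 : A.card ≤ B := by
      rw [hB]
      rw [Nat.le_div_iff_mul_le (by omega : 0 < Ep - E + 1)]
      have : Ep - E + 1 = Ep + 1 - E := by omega
      rw [this]
      exact h1
    calc (A.card : ℝ) ≤ (B : ℝ) := by exact_mod_cast h2
      _ ≤ B * γ⁻¹ ^ k := le_mul_of_one_le_right (by positivity) (one_le_pow₀ hγinv1)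
  induction t with
  | zero =>
    intro A x hx1 hx2 hA2 hdim
    by_cases hd : span F (x '' ↑A) ⊓ LinearMap.ker (Matrix.mulVecLin H) = ⊥
    · exact hcase1 A x hx1 hx2 hA2 hd _
    · exfalso
      obtain ⟨c, hcmem, hc0⟩ := (Submodule.ne_bot_iff _).mp hd
      obtain ⟨hcV, hcK⟩ := Submodule.mem_inf.mp hcmem
      rw [LinearMap.mem_ker, Matrix.mulVecLin_apply] at hcK
      have h3 := rank_ge_three hEEp hβ hx1 hx2 hA2 hcV hcK hc0
      omega
  | succ t IH =>
    intro A x hx1 hx2 hA2 hdim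
    by_cases hd : span F (x '' ↑A) ⊓ LinearMap.ker (Matrix.mulVecLin H) = ⊥
    · exact hcase1 A x hx1 hx2 hA2 hd _
    · obtain ⟨c, hcmem, hc0⟩ := (Submodule.ne_bot_iff _).mp hd
      obtain ⟨hcV, hcK'⟩ := Submodule.mem_inf.mp hcmem
      have hcK : H.mulVec c = 0 := by
        rw [LinearMap.mem_ker, Matrix.mulVecLin_apply] at hcK'; exact hcK'
      have h3 := rank_ge_three hEEp hβ hx1 hx2 hA2 hcV hcK hc0
      have ht2 : 2 ≤ t := by omega
      -- averaging step
      have hdwt : d ≤ hammingNorm c := hdist c hcK hc0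
      set Sc := (univ.filter fun j => c j ≠ 0) with hScdef
      have hScc : d ≤ Sc.card := by rw [hScdef, ← hnorm_eq]; exact hdwt
      have hScne : Sc.Nonempty := Finset.card_pos.mp (by omega)
      obtain ⟨j, hjSc, hjmin⟩ := Finset.exists_min_image Sc
        (fun j => (A.filter fun α => x α j ≠ 0).card) hScne
      have hcj : c j ≠ 0 := (Finset.mem_filter.mp hjSc).2
      have havg : (A.filter fun α => x α j ≠ 0).card * d ≤ A.card * E := by
        have h1 : Sc.card * (A.filter fun α => x α j ≠ 0).card
            ≤ ∑ j' ∈ Sc, (A.filter fun α => x α j' ≠ 0).card :=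
          Finset.card_nsmul_le_sum Sc _ _ (fun j' hj' => hjmin j' hj')
        have h2 : ∑ j' ∈ Sc, (A.filter fun α => x α j' ≠ 0).card ≤ A.card * E := by
          rw [swap_count]
          calc ∑ α ∈ A, (Sc.filter fun j' => x α j' ≠ 0).card
              ≤ ∑ α ∈ A, E := Finset.sum_le_sum (fun α hα => by
                refine le_trans ?_ (hx1 α hα)
                rw [hnorm_eq]
                exact Finset.card_le_card
                  (Finset.filter_subset_filter _ (Finset.subset_univ _)))
            _ = A.card * E := by rw [Finset.sum_const, smul_eq_mul]
        calc (A.filter fun α => x α j ≠ 0).card * d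
            ≤ (A.filter fun α => x α j ≠ 0).card * Sc.card :=
              Nat.mul_le_mul_left _ hScc
          _ = Sc.card * (A.filter fun α => x α j ≠ 0).card := Nat.mul_comm _ _
          _ ≤ _ := h1
          _ ≤ A.card * E := h2
      set A' := A.filter (fun α => x α j = 0) with hA'def
      have hfjA : (A.filter fun α => x α j ≠ 0).card ≤ A.card :=
        Finset.card_le_card (Finset.filter_subset _ _)
      have hA'c : A'.card = A.card - (A.filter fun α => x α j ≠ 0).card := by
        have h2 := Finset.card_filter_add_card_filter_not
          (s := A) (p := fun α => x α j = 0)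
        simp only [hA'def]
        have h4 : (A.filter fun α => ¬ x α j = 0) = (A.filter fun α => x α j ≠ 0) := rfl
        rw [h4] at h2
        omega
      have hγm : γ * A.card ≤ (A'.card : ℝ) := by
        have hfj_le : ((A.filter fun α => x α j ≠ 0).card : ℝ) ≤ (A.card : ℝ) * E / d := by
          rw [le_div_iff₀ hd0]
          exact_mod_cast havg
        have hcast : (A'.card : ℝ)
            = (A.card : ℝ) - ((A.filter fun α => x α j ≠ 0).card : ℝ) := by
          rw [hA'c, Nat.cast_sub hfjA]
        rw [hcast, hγ]
        have hexp : ((d:ℝ) - E) / d * A.card = A.card - A.card * E / d := by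
          field_simp
        rw [hexp]
        linarith [hfj_le]
      have hsubA : A' ⊆ A := Finset.filter_subset _ _
      by_cases hA'2 : 2 ≤ A'.card
      · have hspan' : finrank F (span F (x '' ↑A')) ≤ t := by
          have hle : span F (x '' ↑A')
              ≤ span F (x '' ↑A) ⊓ LinearMap.ker (LinearMap.proj (R := F)
                  (φ := fun _ : Fin n => F) j) := by
            rw [le_inf_iff]
            constructor
            · exact span_mono (Set.image_mono (by exact_mod_cast hsubA))
            · rw [span_le]
              rintro y ⟨α, hα, rfl⟩
              have hα' : α ∈ A' := by exact_mod_cast hα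
              have hxz : x α j = 0 := (Finset.mem_filter.mp hα').2
              simp [LinearMap.mem_ker, hxz]
          have hlt : span F (x '' ↑A) ⊓ LinearMap.ker (LinearMap.proj (R := F)
              (φ := fun _ : Fin n => F) j) < span F (x '' ↑A) := by
            refine lt_of_le_of_ne inf_le_left ?_
            intro heq
            have hcin : c ∈ span F (x '' ↑A) ⊓ LinearMap.ker (LinearMap.proj (R := F)
                (φ := fun _ : Fin n => F) j) := by rw [heq]; exact hcV
            have := (Submodule.mem_inf.mp hcin).2
            rw [LinearMap.mem_ker] at this
            exact hcj (by simpa using this)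
          have h5 := Submodule.finrank_lt_finrank_of_lt hlt
          have h6 := Submodule.finrank_mono hle
          omega
        have hrec := IH A' x (fun α hα => hx1 α (hsubA hα))
          (fun α hα => hx2 α (hsubA hα)) hA'2 hspan'
        have hm : (A.card : ℝ) ≤ γ⁻¹ * A'.card := by
          have h7 : γ⁻¹ * (γ * A.card) ≤ γ⁻¹ * A'.card :=
            mul_le_mul_of_nonneg_left hγm (by positivity)
          have h8 : γ⁻¹ * (γ * A.card) = A.card := by
            field_simp
          linarith [h7, h8.symm.le]
        have hexp2 : t + 1 - 2 = (t - 2) + 1 := by omega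
        calc (A.card : ℝ) ≤ γ⁻¹ * A'.card := hm
          _ ≤ γ⁻¹ * (B * γ⁻¹ ^ (t - 2)) :=
            mul_le_mul_of_nonneg_left hrec (by positivity)
          _ = B * γ⁻¹ ^ ((t - 2) + 1) := by ring
          _ = B * γ⁻¹ ^ (t + 1 - 2) := by rw [hexp2]
      · have hA'1 : (A'.card : ℝ) ≤ 1 := by
          have : A'.card ≤ 1 := by omega
          exact_mod_cast this
        have hm1 : (A.card : ℝ) ≤ γ⁻¹ := by
          have h7 : γ⁻¹ * (γ * A.card) ≤ γ⁻¹ * 1 :=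
            mul_le_mul_of_nonneg_left (hγm.trans hA'1) (by positivity)
          have h8 : γ⁻¹ * (γ * A.card) = A.card := by field_simp
          linarith
        have hexp3 : 1 ≤ t + 1 - 2 := by omega
        calc (A.card : ℝ) ≤ γ⁻¹ := hm1
          _ = 1 * γ⁻¹ ^ 1 := by ring
          _ ≤ B * γ⁻¹ ^ (t + 1 - 2) :=
            mul_le_mul hBR (pow_le_pow_right₀ hγinv1 hexp3) (by positivity) (by positivity)

end Key3

lemma extract {E Ep d s K : ℕ}
    (hE0 : 0 < E) (hEEp : E ≤ Ep) (hEd : E < d)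
    {γ : ℝ} (hγ : γ = ((d : ℝ) - E) / d) {B : ℕ} (hB : B = (Ep + 1) / (Ep - E + 1))
    (hK2 : 2 ≤ K) (hK : (B : ℝ) * γ⁻¹ ^ s < (K : ℝ))
    {H : Matrix (Fin r) (Fin n) F}
    (hH : ∃ s₀ s₁ : Fin r → F,
        K ≤ (affLine s₀ s₁ ∩ syndromeBall H E).ncard ∧
        ¬ affLine s₀ s₁ ⊆ syndromeBall H Ep ∧
        (∀ c : Fin n → F, H.mulVec c = 0 → c ≠ 0 → d ≤ hammingNorm c)) :
    (s + 3 ≤ K ∧ K ≤ Fintype.card F ∧ s + 3 ≤ n) ∧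
    ∃ (p : (Fin r → F) × (Fin r → F)) (S : Finset F) (y : ∀ a ∈ S, Fin n → F),
      S.card = s + 3 ∧ (∀ a (h : a ∈ S), hammingNorm (y a h) ≤ E) ∧
      LinearIndependent F (fun a : {a // a ∈ S} => y a.1 a.2) ∧
      (∀ a (h : a ∈ S), H.mulVec (y a h) = p.1 + a • p.2) := by
  classical
  obtain ⟨s₀, s₁, hKle, hnsub, hdist⟩ := hH
  have hs₁ : s₁ ≠ 0 := by
    intro h
    have hsub : affLine s₀ s₁ ∩ syndromeBall H E ⊆ {s₀} := by
      rintro t ⟨⟨α, rfl⟩, _⟩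
      simp [h]
    have h1 := hKle.trans (Set.ncard_le_ncard hsub (Set.finite_singleton _))
    rw [Set.ncard_singleton] at h1
    omega
  set φ : F → (Fin r → F) := fun α => s₀ + α • s₁ with hφ
  set Af := univ.filter (fun α : F => φ α ∈ syndromeBall H E) with hAf
  have hKAf : K ≤ Af.card := by
    have hsub : affLine s₀ s₁ ∩ syndromeBall H E ⊆ ↑(Af.image φ) := by
      rintro t ⟨⟨α, rfl⟩, htb⟩
      simp only [Finset.coe_image, Set.mem_image, Finset.mem_coe, hAf, Finset.mem_filter]
      exact ⟨α, ⟨Finset.mem_univ _, htb⟩, rfl⟩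
    have h1 := Set.ncard_le_ncard hsub (Af.image φ).finite_toSet
    rw [Set.ncard_coe_finset] at h1
    exact hKle.trans (h1.trans Finset.card_image_le)
  have hKq : K ≤ Fintype.card F := hKAf.trans (by simpa using Finset.card_le_univ Af)
  obtain ⟨A, hAsub, hAcard⟩ := Finset.exists_subset_card_eq hKAf
  set x : F → (Fin n → F) := fun α =>
    if h : ∃ z : Fin n → F, hammingNorm z ≤ E ∧ H.mulVec z = φ α then h.choose else 0
    with hx
  have hxspec : ∀ α ∈ A, hammingNorm (x α) ≤ E ∧ H.mulVec (x α) = φ α := by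
    intro α hα
    have hαf : α ∈ Af := hAsub hα
    rw [hAf, Finset.mem_filter] at hαf
    obtain ⟨z, hz1, hz2⟩ := hαf.2
    have hex : ∃ z : Fin n → F, hammingNorm z ≤ E ∧ H.mulVec z = φ α := ⟨z, hz1, hz2⟩
    rw [hx]
    simp only [dif_pos hex]
    exact hex.choose_spec
  have hx1 : ∀ α ∈ A, hammingNorm (x α) ≤ E := fun α hα => (hxspec α hα).1
  have hx2 : ∀ α ∈ A, H.mulVec (x α) = s₀ + α • s₁ := fun α hα => (hxspec α hα).2
  obtain ⟨tp, htpL, htpB⟩ := Set.not_subset.mp hnsub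
  obtain ⟨β, rfl⟩ := htpL
  have hβ : ∀ z : Fin n → F, hammingNorm z ≤ Ep → H.mulVec z ≠ s₀ + β • s₁ :=
    fun z hz hEq => htpB ⟨z, hz, hEq⟩
  have hA2 : 2 ≤ A.card := by omega
  have hrank : s + 3 ≤ finrank F (span F (x '' ↑A)) := by
    by_contra hcon
    push_neg at hcon
    have hklem := key_lemma hE0 hEEp hEd hdist hβ hγ hB (s + 2) A x hx1 hx2 hA2
      (by omega)
    rw [hAcard] at hklem
    have hred : (s + 2) - 2 = s := by omega
    rw [hred] at hklem
    linarith [hK]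
  have hs3n : s + 3 ≤ n := by
    have h1 : finrank F (span F (x '' ↑A)) ≤ finrank F (Fin n → F) :=
      Submodule.finrank_le _
    simp only [Module.finrank_pi, Fintype.card_fin] at h1
    omega
  obtain ⟨bset, hbsub, hbspan, hbind⟩ := exists_linearIndependent F (x '' (↑A : Set F))
  have hbfin : bset.Finite := Set.Finite.subset (Set.Finite.image _ A.finite_toSet) hbsub
  haveI := hbfin.fintype
  have hbcard : s + 3 ≤ bset.toFinset.card := by
    have h1 : finrank F (span F bset) = bset.toFinset.card :=
      finrank_span_set_eq_card hbind
    rw [← hbspan] at hrank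
    omega
  obtain ⟨b', hb'sub, hb'card⟩ := Finset.exists_subset_card_eq hbcard
  have hb'bset : (↑b' : Set (Fin n → F)) ⊆ bset := by
    intro v hv
    exact Set.mem_toFinset.mp (hb'sub hv)
  have hb'ind : LinearIndependent F ((↑) : (↑b' : Set (Fin n → F)) → (Fin n → F)) :=
    LinearIndepOn.mono (v := id) hbind hb'bset
  set g : (Fin n → F) → F := fun v =>
    if h : ∃ α, α ∈ A ∧ x α = v then h.choose else 0 with hg
  have hgspec : ∀ v ∈ b', g v ∈ A ∧ x (g v) = v := by
    intro v hv
    have hvb : v ∈ bset := hb'bset hv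
    have hvim : v ∈ x '' (↑A : Set F) := hbsub hvb
    obtain ⟨α, hα, hxα⟩ := hvim
    have hex : ∃ α, α ∈ A ∧ x α = v := ⟨α, by exact_mod_cast hα, hxα⟩
    rw [hg]
    simp only [dif_pos hex]
    exact hex.choose_spec
  set S := b'.image g with hS
  have hginj : Set.InjOn g ↑b' := by
    intro v₁ hv₁ v₂ hv₂ heq
    have h1 := (hgspec v₁ (by exact_mod_cast hv₁)).2
    have h2 := (hgspec v₂ (by exact_mod_cast hv₂)).2
    rw [← h1, ← h2, heq]
  have hScard : S.card = s + 3 := by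
    rw [hS, Finset.card_image_of_injOn hginj, hb'card]
  have hSA : S ⊆ A := by
    intro a ha
    obtain ⟨v, hv, rfl⟩ := Finset.mem_image.mp ha
    exact (hgspec v hv).1
  have hxmem : ∀ a ∈ S, x a ∈ b' ∧ g (x a) = a := by
    intro a ha
    obtain ⟨v, hv, rfl⟩ := Finset.mem_image.mp ha
    rw [(hgspec v hv).2]
    exact ⟨hv, rfl⟩
  have hs3K : s + 3 ≤ K := by
    have := Finset.card_le_card hSA
    omega
  have hfam : LinearIndependent F (fun a : {a // a ∈ S} => x a.1) := by
    have einj : Function.Injective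
        (fun a : {a // a ∈ S} => (⟨x a.1, Finset.mem_coe.mpr (hxmem a.1 a.2).1⟩ :
          (↑b' : Set (Fin n → F)))) := by
      intro a₁ a₂ heq
      have h1 : x a₁.1 = x a₂.1 := congrArg Subtype.val heq
      have h2 := (hxmem a₁.1 a₁.2).2
      have h3 := (hxmem a₂.1 a₂.2).2
      apply Subtype.ext
      rw [← h2, ← h3, h1]
    exact hb'ind.comp
      (fun a : {a // a ∈ S} => (⟨x a.1, Finset.mem_coe.mpr (hxmem a.1 a.2).1⟩ :
        (↑b' : Set (Fin n → F)))) einj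
  exact ⟨⟨hs3K, hKq, hs3n⟩, (s₀, s₁), S, (fun a _ => x a), hScard,
    (fun a ha => hx1 a (hSA ha)), hfam, (fun a ha => hx2 a (hSA ha))⟩

end Aux

/-- Moment bound for bad syndrome lines: the probability (over a uniformly random
parity-check matrix `H`) that some syndrome line has at least `K` points in `H_E`, is not
contained in `H_{E⁺}`, and the code has minimum distance at least `d`, is at most
`q^{2r}·C(q,K)·C(K,s+3)·|B_E|^{s+3}·q^{−r(s+3)}`. -/
theorem stmt_10 {F : Type} [Field F] [Fintype F] [DecidableEq F]
    (r n : ℕ) (hr : 0 < r) (hn : 0 < n)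
    (E Ep d s K : ℕ) (hE0 : 0 < E) (hEEp : E ≤ Ep) (hEd : E < d)
    (γ : ℝ) (hγ : γ = ((d : ℝ) - E) / d)
    (B : ℕ) (hB : B = (Ep + 1) / (Ep - E + 1))
    (hK2 : 2 ≤ K) (hK : (B : ℝ) * γ⁻¹ ^ s < (K : ℝ)) :
    ({H : Matrix (Fin r) (Fin n) F | ∃ s₀ s₁ : Fin r → F,
          K ≤ (affLine s₀ s₁ ∩ syndromeBall H E).ncard ∧
          ¬ affLine s₀ s₁ ⊆ syndromeBall H Ep ∧
          (∀ c : Fin n → F, H.mulVec c = 0 → c ≠ 0 → d ≤ hammingNorm c)}.ncard : ℝ) /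
        (Fintype.card F : ℝ) ^ (r * n)
      ≤ (Fintype.card F : ℝ) ^ (2 * r) * ((Fintype.card F).choose K : ℝ) *
          (K.choose (s + 3) : ℝ) *
          ((∑ i ∈ Finset.range (E + 1), n.choose i * (Fintype.card F - 1) ^ i : ℕ) : ℝ) ^ (s + 3) /
          (Fintype.card F : ℝ) ^ (r * (s + 3)) := by
  classical
  set q := Fintype.card F with hq
  have hq1 : 1 ≤ q := Fintype.card_pos
  have hqR : (0:ℝ) < (q:ℝ) := by exact_mod_cast hq1
  set P : Matrix (Fin r) (Fin n) F → Prop := fun H => ∃ s₀ s₁ : Fin r → F,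
      K ≤ (affLine s₀ s₁ ∩ syndromeBall H E).ncard ∧
      ¬ affLine s₀ s₁ ⊆ syndromeBall H Ep ∧
      (∀ c : Fin n → F, H.mulVec c = 0 → c ≠ 0 → d ≤ hammingNorm c) with hP
  set Nfin := (univ : Finset (Matrix (Fin r) (Fin n) F)).filter P with hNfin
  have hNcard : ({H : Matrix (Fin r) (Fin n) F | P H}).ncard = Nfin.card := by
    rw [show {H : Matrix (Fin r) (Fin n) F | P H} = ↑Nfin by
      ext H; simp [hNfin]]
    exact Set.ncard_coe_finset _
  rw [hNcard]
  rcases Finset.eq_empty_or_nonempty Nfin with hemp | ⟨H₀, hH₀⟩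
  · rw [hemp]
    simp only [Finset.card_empty, Nat.cast_zero, zero_div]
    positivity
  · have hH₀P : P H₀ := (Finset.mem_filter.mp hH₀).2
    obtain ⟨⟨hs3K, hKq, hs3n⟩, _⟩ := extract hE0 hEEp hEd hγ hB hK2 hK hH₀P
    set k := s + 3 with hk
    set ballF := (univ : Finset (Fin n → F)).filter (fun xx => hammingNorm xx ≤ E)
      with hballF
    set T := ((univ : Finset ((Fin r → F) × (Fin r → F)))) ×ˢ
      ((Finset.powersetCard k (univ : Finset F)).sigma
        (fun S => S.pi (fun _ => ballF))) with hT
    set Cond : ((Fin r → F) × (Fin r → F)) × (Σ S : Finset F, ∀ a ∈ S, Fin n → F) →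
        Matrix (Fin r) (Fin n) F → Prop := fun τ H =>
      ∀ a (h : a ∈ τ.2.1), H.mulVec (τ.2.2 a h) = τ.1.1 + a • τ.1.2 with hCond
    set Ind : ((Fin r → F) × (Fin r → F)) × (Σ S : Finset F, ∀ a ∈ S, Fin n → F) →
        Prop := fun τ =>
      LinearIndependent F (fun a : {a // a ∈ τ.2.1} => τ.2.2 a.1 a.2) with hInd
    set G : ((Fin r → F) × (Fin r → F)) × (Σ S : Finset F, ∀ a ∈ S, Fin n → F) →
        Finset (Matrix (Fin r) (Fin n) F) := fun τ =>
      if Ind τ then univ.filter (Cond τ) else ∅ with hG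
    -- union bound
    have hsub : Nfin ⊆ T.biUnion G := by
      intro H hH
      have hPH : P H := (Finset.mem_filter.mp hH).2
      obtain ⟨-, p, S, y, hScard, hywt, hind, hcond⟩ := extract hE0 hEEp hEd hγ hB hK2 hK hPH
      rw [Finset.mem_biUnion]
      refine ⟨(p, ⟨S, y⟩), ?_, ?_⟩
      · rw [hT, Finset.mem_product]
        constructor
        · exact Finset.mem_univ _
        · rw [Finset.mem_sigma]
          constructor
          · rw [Finset.mem_powersetCard]
            exact ⟨Finset.subset_univ _, hScard⟩
          · rw [Finset.mem_pi]
            intro a ha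
            rw [hballF, Finset.mem_filter]
            exact ⟨Finset.mem_univ _, hywt a ha⟩
      · have hGτ : G (p, ⟨S, y⟩) = univ.filter (Cond (p, ⟨S, y⟩)) := by
          simp only [hG, if_pos (show Ind (p, ⟨S, y⟩) from hind)]
        rw [hGτ, Finset.mem_filter]
        exact ⟨Finset.mem_univ _, hcond⟩
    have hGbound : ∀ τ ∈ T, (G τ).card ≤ q ^ (r * (n - k)) := by
      intro τ hτ
      by_cases hIτ : Ind τ
      · have hGτ : G τ = univ.filter (Cond τ) := by
          simp only [hG, if_pos hIτ]
        rw [hGτ]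
        rw [hT, Finset.mem_product] at hτ
        have hτ2 := Finset.mem_sigma.mp hτ.2
        have hScard : τ.2.1.card = k := (Finset.mem_powersetCard.mp hτ2.1).2
        have e : Fin k ≃ {a // a ∈ τ.2.1} :=
          (Fintype.equivFinOfCardEq (by rw [Fintype.card_coe, hScard])).symm
        set v : Fin k → (Fin n → F) := fun i => τ.2.2 (e i).1 (e i).2 with hv
        set tt : Fin k → (Fin r → F) := fun i => τ.1.1 + (e i).1 • τ.1.2 with htt
        have hvind : LinearIndependent F v := hIτ.comp e e.injective
        calc (univ.filter (Cond τ)).card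
            ≤ ((univ : Finset (Matrix (Fin r) (Fin n) F)).filter
                (fun H => ∀ i, H.mulVec (v i) = tt i)).card := by
              apply Finset.card_le_card
              apply Finset.monotone_filter_right
              intro H _ hH i
              exact hH (e i).1 (e i).2
          _ ≤ q ^ (r * (n - k)) := count_fiber k v hvind tt
      · have hGτ : G τ = ∅ := by
          simp only [hG, if_neg hIτ]
        rw [hGτ]
        simp
    have hTcard : T.card = q ^ r * q ^ r * (Nat.choose q k * ballF.card ^ k) := by
      rw [hT, Finset.card_product, Finset.card_sigma]
      have h1 : (Finset.card (univ : Finset ((Fin r → F) × (Fin r → F))))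
          = q ^ r * q ^ r := by
        rw [Finset.card_univ, Fintype.card_prod]
        congr 1 <;> · rw [Fintype.card_fun, Fintype.card_fin]
      have h2 : ∀ S ∈ Finset.powersetCard k (univ : Finset F),
          (S.pi (fun _ => ballF)).card = ballF.card ^ k := by
        intro S hS
        rw [Finset.card_pi, Finset.prod_const, (Finset.mem_powersetCard.mp hS).2]
      rw [h1, Finset.sum_congr rfl h2, Finset.sum_const, Finset.card_powersetCard,
        Finset.card_univ, smul_eq_mul]
    have hNnat : Nfin.card ≤ q ^ r * q ^ r * (Nat.choose q k * ballF.card ^ k)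
        * q ^ (r * (n - k)) := by
      calc Nfin.card ≤ (T.biUnion G).card := Finset.card_le_card hsub
        _ ≤ ∑ τ ∈ T, (G τ).card := Finset.card_biUnion_le
        _ ≤ T.card * q ^ (r * (n - k)) := Finset.sum_le_card_nsmul T _ _ hGbound
        _ = _ := by rw [hTcard]
    -- pass to the target form
    set M := (∑ i ∈ Finset.range (E + 1), n.choose i * (q - 1) ^ i) with hM
    have hMball : ballF.card ≤ M := ball_card_le E
    have hcho : Nat.choose q k ≤ Nat.choose q K * Nat.choose K k := by
      have hident := Nat.choose_mul (n := q) (k := K) (s := k) hs3K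
      have hpos : 0 < (q - k).choose (K - k) := Nat.choose_pos (by omega)
      calc Nat.choose q k = Nat.choose q k * 1 := (Nat.mul_one _).symm
        _ ≤ Nat.choose q k * ((q - k).choose (K - k)) :=
            Nat.mul_le_mul_left _ hpos
        _ = Nat.choose q K * Nat.choose K k := hident.symm
    have hNnat2 : Nfin.card * q ^ (r * k)
        ≤ q ^ (2 * r) * (Nat.choose q K * Nat.choose K k) * M ^ k * q ^ (r * n) := by
      have h3 : q ^ r * q ^ r = q ^ (2 * r) := by
        rw [← pow_add]; congr 1; omega
      have h4 : q ^ (r * (n - k)) * q ^ (r * k) = q ^ (r * n) := by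
        rw [← pow_add]; congr 1
        have : n - k + k = n := by omega
        calc r * (n - k) + r * k = r * ((n - k) + k) := by ring
          _ = r * n := by rw [this]
      calc Nfin.card * q ^ (r * k)
          ≤ (q ^ r * q ^ r * (Nat.choose q k * ballF.card ^ k) * q ^ (r * (n - k)))
              * q ^ (r * k) := Nat.mul_le_mul_right _ hNnat
        _ ≤ (q ^ r * q ^ r * ((Nat.choose q K * Nat.choose K k) * M ^ k)
              * q ^ (r * (n - k))) * q ^ (r * k) := by
            apply Nat.mul_le_mul_right
            apply Nat.mul_le_mul_right
            apply Nat.mul_le_mul_left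
            exact Nat.mul_le_mul hcho (Nat.pow_le_pow_left hMball k)
        _ = q ^ (2 * r) * (Nat.choose q K * Nat.choose K k) * M ^ k * q ^ (r * n) := by
            rw [← h3, ← h4]; ring
    -- real arithmetic
    rw [div_le_div_iff₀ (by positivity) (by positivity)]
    calc (Nfin.card : ℝ) * (q : ℝ) ^ (r * k)
        ≤ ((q ^ (2 * r) * (Nat.choose q K * Nat.choose K k) * M ^ k * q ^ (r * n) : ℕ) : ℝ) := by
          rw [← Nat.cast_pow, ← Nat.cast_mul]
          exact_mod_cast hNnat2
      _ = (q : ℝ) ^ (2 * r) * ((Nat.choose q K : ℝ)) * (Nat.choose K k : ℝ) * (M : ℝ) ^ k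
          * (q : ℝ) ^ (r * n) := by push_cast; ring
end

section
/- Let q be a prime power, H ∈ 𝔽_q^{r×n}, and let C = ker(H) be a linear code with minimum distance d(C) ≥ d, where d > E > 0; set γ := (d − E)/d. Let S = s₀ + span(s₁,…,s_m) ⊆ 𝔽_q^r be an affine syndrome space of dimension m (s₁,…,s_m linearly independent over 𝔽_q), and let h := dim_{𝔽_q} span{s₀, s₁, …, s_m}. Let β₁,…,β_K ∈ 𝔽_q^m be pairwise distinct points that are not all contained in any affine hyperplane of 𝔽_q^m. Let X = [x₁|⋯|x_K] ∈ 𝔽_q^{n×K} satisfy Hx_j = s₀ + Σ_{i=1}^{m} (β_j)_i s_i and wt(x_j) ≤ E for all j ∈ [K], and suppose rank(X) = t ≥ h + 1. Then there exists a subset J ⊆ [K] with |J| ≥ Kγ such that the restricted matrix X_J = [x_j]_{j∈J} still satisfies Hx_j = s₀ + Σ_{i=1}^{m} (β_j)_i s_i and wt(x_j) ≤ E for all j ∈ J, and rank(X_J) ≤ t − 1. -/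
/-- Rank-reduction step for witness matrices of an affine syndrome `m`-space:
if the evaluation points avoid every affine hyperplane and the witness rank is at least
`h + 1`, one keeps a `γ`-fraction of the columns and drops the rank by one. -/
theorem stmt_15 {F : Type} [Field F] [Fintype F] [DecidableEq F] {r n : ℕ}
    (H : Matrix (Fin r) (Fin n) F) (d E : ℕ) (hE0 : 0 < E) (hEd : E < d)
    (hdist : ∀ c : Fin n → F, H.mulVec c = 0 → c ≠ 0 → d ≤ hammingNorm c)
    (γ : ℝ) (hγ : γ = ((d : ℝ) - E) / d)
    (m : ℕ) (hm : 1 ≤ m) (s₀ : Fin r → F) (s : Fin m → Fin r → F)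
    (hs : LinearIndependent F s)
    (h : ℕ)
    (hh : h = Module.finrank F (Submodule.span F (insert s₀ (Set.range s))))
    (K : ℕ) (β : Fin K → Fin m → F) (hβ : Function.Injective β)
    (hplane : ¬ ∃ (a : Fin m → F) (b : F), a ≠ 0 ∧ ∀ j : Fin K, ∑ i, a i * β j i = b)
    (x : Fin K → Fin n → F)
    (hwit : ∀ j : Fin K,
      H.mulVec (x j) = s₀ + ∑ i, β j i • s i ∧ hammingNorm (x j) ≤ E)
    (t : ℕ) (ht : h + 1 ≤ t)
    (hrank : (Matrix.of fun (i : Fin n) (j : Fin K) => x j i).rank = t) :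
    ∃ J : Finset (Fin K),
      (K : ℝ) * γ ≤ (J.card : ℝ) ∧
      (Matrix.of fun (i : Fin n) (j : J) => x j i).rank ≤ t - 1 := by
  classical
  set L := H.mulVecLin with hL
  set V : Submodule F (Fin n → F) := Submodule.span F (Set.range x) with hV
  set W : Submodule F (Fin r → F) := Submodule.span F (insert s₀ (Set.range s)) with hW
  -- finrank V = t
  have hVt : Module.finrank F V = t := by
    rw [← hrank, Matrix.rank_eq_finrank_span_cols]
    rfl
  -- map L V ≤ W
  have hmap : Submodule.map L V ≤ W := by
    rw [hV, Submodule.map_span, Submodule.span_le]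
    rintro - ⟨-, ⟨j, rfl⟩, rfl⟩
    have h1 : L (x j) = s₀ + ∑ i, β j i • s i := (hwit j).1
    rw [h1]
    exact W.add_mem (Submodule.subset_span (Set.mem_insert _ _))
      (W.sum_mem fun i _ => W.smul_mem _
        (Submodule.subset_span (Set.mem_insert_of_mem _ ⟨i, rfl⟩)))
  -- nontrivial kernel element
  have hker : ∃ c : Fin n → F, c ∈ V ∧ c ≠ 0 ∧ H.mulVec c = 0 := by
    by_contra hcon
    push_neg at hcon
    have hinj : LinearMap.ker (L.domRestrict V) = ⊥ := by
      rw [LinearMap.ker_eq_bot']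
      rintro ⟨v, hv⟩ hLv
      have hLv' : L v = 0 := hLv
      have : v = 0 := by
        by_contra hv0
        exact hcon v hv hv0 hLv'
      exact Subtype.ext this
    have h1 : Module.finrank F V ≤ Module.finrank F W := by
      have h2 := LinearMap.finrank_range_add_finrank_ker (L.domRestrict V)
      rw [hinj, finrank_bot, add_zero] at h2
      rw [← h2, LinearMap.range_domRestrict]
      exact Submodule.finrank_mono hmap
    omega
  obtain ⟨c, hcV, hc0, hcker⟩ := hker
  have hcd : d ≤ hammingNorm c := hdist c hcker hc0
  -- counting
  set T : Finset (Fin n) := Finset.univ.filter (fun i => c i ≠ 0) with hT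
  have hTcard : T.card = hammingNorm c := rfl
  have hTne : T.Nonempty := by
    rw [← Finset.card_pos, hTcard]; omega
  set f : Fin n → ℕ := fun i => (Finset.univ.filter fun j => x j i ≠ 0).card with hf
  obtain ⟨i₀, hi₀T, hi₀min⟩ := T.exists_min_image f hTne
  have hsum : ∑ i ∈ T, f i ≤ K * E := by
    have h1 : ∀ i, f i = ∑ j : Fin K, if x j i ≠ 0 then 1 else 0 := fun i => by
      rw [hf]; simp [Finset.card_filter]
    calc ∑ i ∈ T, f i = ∑ j : Fin K, ∑ i ∈ T, (if x j i ≠ 0 then 1 else 0) := by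
          simp_rw [h1]; rw [Finset.sum_comm]
      _ ≤ ∑ j : Fin K, E := by
          refine Finset.sum_le_sum fun j _ => ?_
          calc ∑ i ∈ T, (if x j i ≠ 0 then 1 else 0)
              = (T.filter fun i => x j i ≠ 0).card := by rw [Finset.card_filter]
            _ ≤ (Finset.univ.filter fun i => x j i ≠ 0).card :=
                Finset.card_le_card (Finset.filter_subset_filter _ (Finset.subset_univ T))
            _ ≤ E := (hwit j).2
      _ = K * E := by simp [mul_comm]
  have hmin : T.card * f i₀ ≤ ∑ i ∈ T, f i := by
    have := Finset.card_nsmul_le_sum T f (f i₀) (fun i hi => hi₀min i hi)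
    simpa using this
  have hfd : f i₀ * d ≤ K * E := by
    calc f i₀ * d ≤ f i₀ * T.card := by
          apply Nat.mul_le_mul_left; rw [hTcard]; exact hcd
      _ = T.card * f i₀ := Nat.mul_comm _ _
      _ ≤ ∑ i ∈ T, f i := hmin
      _ ≤ K * E := hsum
  -- the subset J
  set J : Finset (Fin K) := Finset.univ.filter (fun j => x j i₀ = 0) with hJ
  have hJcard : J.card + f i₀ = K := by
    rw [hJ, hf]
    have := Finset.card_filter_add_card_filter_not (s := (Finset.univ : Finset (Fin K)))
      (p := fun j => x j i₀ = 0)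
    simpa using this
  refine ⟨J, ?_, ?_⟩
  · -- cardinality bound
    rw [hγ]
    have hd0 : (0:ℝ) < d := by
      have : 0 < d := hE0.trans hEd
      exact_mod_cast this
    have h1 : (f i₀ : ℝ) * d ≤ (K:ℝ) * E := by exact_mod_cast hfd
    have h2 : (J.card : ℝ) + f i₀ = K := by exact_mod_cast hJcard
    rw [mul_div_assoc', div_le_iff₀ hd0]
    nlinarith [h1, h2]
  · -- rank bound
    set V' : Submodule F (Fin n → F) := V ⊓ LinearMap.ker (LinearMap.proj i₀) with hV'
    have hclt : V' < V := by
      refine lt_of_le_of_ne inf_le_left fun heq => ?_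
      have hcV' : c ∈ V' := heq ▸ hcV
      have : c i₀ = 0 := hcV'.2
      have hci₀ : c i₀ ≠ 0 := by
        have := Finset.mem_filter.mp hi₀T
        exact this.2
      exact hci₀ this
    have hV't : Module.finrank F V' < t := by
      rw [← hVt]
      exact Submodule.finrank_lt_finrank_of_lt hclt
    have hle : (Matrix.of fun (i : Fin n) (j : J) => x j i).rank ≤ Module.finrank F V' := by
      rw [Matrix.rank_eq_finrank_span_cols]
      refine Submodule.finrank_mono (Submodule.span_le.mpr ?_)
      rintro - ⟨j, rfl⟩
      refine ⟨Submodule.subset_span ⟨(j : Fin K), rfl⟩, ?_⟩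
      have hx0 : x j i₀ = 0 := (Finset.mem_filter.mp j.2).2
      simpa [LinearMap.mem_ker] using hx0
    omega
end

section
/- Let q be a prime power, ℓ ≥ 1, and a₀, a₁, …, a_ℓ ∈ 𝔽_q^n. Define the degree-ℓ polynomial curve Γ(α) := a₀ + Σ_{j=1}^{ℓ} α^j a_j for α ∈ 𝔽_q, and let A = [a₀|⋯|a_ℓ] ∈ 𝔽_q^{n×(ℓ+1)}. Let 0 ≤ E ≤ E⁺ ≤ n. If rowwt(A) > E⁺, then |{α ∈ 𝔽_q : Γ(α) ∈ B_E}| ≤ ℓ·(E⁺ + 1)/(E⁺ − E + 1). -/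
open Finset Polynomial

lemma double_count {α β : Type*} (S : Finset α) (T : Finset β) (r : α → β → Prop)
    [∀ a b, Decidable (r a b)] (m k : ℕ)
    (hS : ∀ a ∈ S, m ≤ (T.filter (r a)).card)
    (hT : ∀ b ∈ T, (S.filter (r · b)).card ≤ k) :
    S.card * m ≤ T.card * k := by
  calc S.card * m = ∑ a ∈ S, m := by rw [Finset.sum_const, smul_eq_mul, mul_comm]
    _ ≤ ∑ a ∈ S, (T.filter (r a)).card := Finset.sum_le_sum hS
    _ = ∑ a ∈ S, ∑ b ∈ T, (if r a b then 1 else 0) := by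
        simp only [Finset.card_filter]
    _ = ∑ b ∈ T, ∑ a ∈ S, (if r a b then 1 else 0) := Finset.sum_comm
    _ = ∑ b ∈ T, (S.filter (r · b)).card := by simp only [Finset.card_filter]
    _ ≤ ∑ b ∈ T, k := Finset.sum_le_sum hT
    _ = T.card * k := by rw [Finset.sum_const, smul_eq_mul]

/-- If the coefficient matrix of a degree-`ℓ` polynomial curve has row weight exceeding
`E⁺`, then at most `ℓ·(E⁺+1)/(E⁺−E+1)` points of the curve lie in the Hamming ball
`B_E`. -/
theorem stmt_19 {F : Type} [Field F] [Fintype F] [DecidableEq F] {n : ℕ}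
    (ℓ : ℕ) (hℓ : 1 ≤ ℓ) (a : Fin (ℓ + 1) → Fin n → F)
    (E Ep : ℕ) (hEEp : E ≤ Ep) (hEpn : Ep ≤ n)
    (hrow : Ep < ({i : Fin n | ∃ j, a j i ≠ 0}).ncard) :
    (({α : F |
        hammingNorm (a 0 + ∑ j : Fin ℓ, α ^ ((j : ℕ) + 1) • a j.succ) ≤ E}).ncard : ℝ) ≤
      (ℓ : ℝ) * ((Ep : ℝ) + 1) / ((Ep : ℝ) - E + 1) := by
  classical
  -- pointwise value
  set v : Fin n → F → F := fun i α => a 0 i + ∑ j : Fin ℓ, α ^ ((j : ℕ) + 1) * a j.succ i with hv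
  have hval : ∀ (α : F) (i : Fin n),
      (a 0 + ∑ j : Fin ℓ, α ^ ((j : ℕ) + 1) • a j.succ) i = v i α := by
    intro α i
    simp [hv, Finset.sum_apply]
  -- the polynomial
  set p : Fin n → Polynomial F := fun i => ∑ j : Fin (ℓ + 1), monomial (j : ℕ) (a j i) with hp
  have heval : ∀ (i : Fin n) (α : F), (p i).eval α = v i α := by
    intro i α
    simp only [hp, eval_finset_sum, eval_monomial]
    rw [Fin.sum_univ_succ]
    simp [hv, mul_comm]
  have hcoeff : ∀ (i : Fin n) (j : Fin (ℓ + 1)), (p i).coeff (j : ℕ) = a j i := by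
    intro i j
    simp only [hp, finset_sum_coeff, coeff_monomial]
    rw [Finset.sum_eq_single j]
    · simp
    · intro b _ hb
      have : (b : ℕ) ≠ (j : ℕ) := fun h => hb (Fin.ext h)
      simp [this]
    · simp
  have hdeg : ∀ i : Fin n, (p i).natDegree ≤ ℓ := by
    intro i
    apply Polynomial.natDegree_sum_le_of_forall_le
    intro j _
    exact (natDegree_monomial_le _).trans (by omega)
  -- sets
  set S : Finset F := {α : F |
      hammingNorm (a 0 + ∑ j : Fin ℓ, α ^ ((j : ℕ) + 1) • a j.succ) ≤ E} with hS
  have hScard : ({α : F |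
      hammingNorm (a 0 + ∑ j : Fin ℓ, α ^ ((j : ℕ) + 1) • a j.succ) ≤ E}).ncard = S.card := by
    rw [hS, Set.ncard_eq_toFinset_card']
    simp
  set R : Finset (Fin n) := {i : Fin n | ∃ j, a j i ≠ 0} with hR
  have hRcard : Ep < R.card := by
    rwa [Set.ncard_eq_toFinset_card', Set.toFinset_setOf] at hrow
  obtain ⟨T, hTR, hTcard⟩ := Finset.exists_subset_card_eq (s := R) (n := Ep + 1) hRcard
  -- lower bound per α
  have key1 : ∀ α ∈ S, Ep + 1 - E ≤ (T.filter (fun i => v i α = 0)).card := by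
    intro α hα
    have hα' : hammingNorm (a 0 + ∑ j : Fin ℓ, α ^ ((j : ℕ) + 1) • a j.succ) ≤ E := by
      simpa [hS] using hα
    have hne : (T.filter (fun i => ¬ v i α = 0)).card ≤ E := by
      refine le_trans (Finset.card_le_card ?_) hα'
      intro i hi
      simp only [Finset.mem_filter] at hi
      simp only [hammingNorm, Finset.mem_filter, Finset.mem_univ, true_and, Set.mem_setOf_eq]
      rw [hval]
      exact hi.2
    have := Finset.card_filter_add_card_filter_not (s := T)
      (p := fun i => v i α = 0)
    omega
  -- upper bound per i
  have key2 : ∀ i ∈ T, (S.filter (fun α => v i α = 0)).card ≤ ℓ := by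
    intro i hi
    have hiR : i ∈ R := hTR hi
    obtain ⟨j, hj⟩ : ∃ j, a j i ≠ 0 := by simpa [hR] using hiR
    have hpne : p i ≠ 0 := fun h => hj (by rw [← hcoeff i j, h, coeff_zero])
    have hsub : S.filter (fun α => v i α = 0) ⊆ (p i).roots.toFinset := by
      intro α hα
      simp only [Finset.mem_filter] at hα
      rw [Multiset.mem_toFinset, mem_roots hpne]
      rw [IsRoot, heval]
      exact hα.2
    calc (S.filter (fun α => v i α = 0)).card ≤ (p i).roots.toFinset.card :=
          Finset.card_le_card hsub
      _ ≤ (p i).roots.card := Multiset.toFinset_card_le _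
      _ ≤ (p i).natDegree := (p i).card_roots'
      _ ≤ ℓ := hdeg i
  have hmain : S.card * (Ep + 1 - E) ≤ (Ep + 1) * ℓ := by
    have := double_count S T (fun α i => v i α = 0) (Ep + 1 - E) ℓ key1 key2
    rwa [hTcard] at this
  have hpos : (0:ℝ) < (Ep:ℝ) - E + 1 := by
    have : (E:ℝ) ≤ Ep := Nat.cast_le.2 hEEp
    linarith
  rw [hScard, le_div_iff₀ hpos]
  have hcast : ((S.card * (Ep + 1 - E) : ℕ) : ℝ) ≤ (((Ep + 1) * ℓ : ℕ) : ℝ) :=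
    Nat.cast_le.2 hmain
  push_cast [Nat.cast_sub (by omega : E ≤ Ep + 1)] at hcast
  linarith
end
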